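/- arXiv:1807.06578 — 8 statements merged into one kernel-verified Lean document; each statement's English description precedes it below -/
import Mathlib

section
/- Let M be a matroid on a finite set E. The boolean intervals [B \ Int(B), B ∪ Ext(B)], taken over all bases B of M, form a partition of the power set 2^E: every subset A ⊆ E satisfies B \ Int(B) ⊆ A ⊆ B ∪ Ext(B) for exactly one basis B of M. -/
namespace AB
open Set

variable {α : Type*}

/-- A circuit of a matroid: a minimal dependent set. -/
def Circuit (M : Matroid α) (C : Set α) : Prop :=
  M.Dep C ∧ ∀ D, D ⊂ C → M.Indep D

/-- A cocircuit: a circuit of the dual matroid. -/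
def Cocircuit (M : Matroid α) (C : Set α) : Prop := Circuit M✶ C

/-- `b` is internally active for the basis `B`: `b ∈ B` and `b` is the minimum of the
fundamental cocircuit `C*(B;b)`, the unique cocircuit contained in `(M.E \ B) ∪ {b}`. -/
def IntActive [LinearOrder α] (M : Matroid α) (B : Set α) (b : α) : Prop :=
  b ∈ B ∧ ∃ C, Cocircuit M C ∧ C ⊆ (M.E \ B) ∪ {b} ∧ b ∈ C ∧ ∀ x ∈ C, b ≤ x

/-- `e` is externally active for the basis `B`: `e ∈ M.E \ B` and `e` is the minimum of the
fundamental circuit `C(B;e)`, the unique circuit contained in `B ∪ {e}`. -/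
def ExtActive [LinearOrder α] (M : Matroid α) (B : Set α) (e : α) : Prop :=
  e ∈ M.E \ B ∧ ∃ C, Circuit M C ∧ C ⊆ B ∪ {e} ∧ e ∈ C ∧ ∀ x ∈ C, e ≤ x

/-- `Int(B)`, the set of internally active elements of `B`. -/
def IntSet [LinearOrder α] (M : Matroid α) (B : Set α) : Set α := {b | IntActive M B b}

/-- `Ext(B)`, the set of externally active elements of `B`. -/
def ExtSet [LinearOrder α] (M : Matroid α) (B : Set α) : Set α := {e | ExtActive M B e}

end AB

namespace StmtAux
open Set AB

variable {α : Type*} {M : Matroid α} {A B C D K : Set α} {b c e x y z : α}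

/-! ### The auxiliary order `r` -/

/-- The order: elements of `A` first, in decreasing order; then non-elements in increasing order. -/
def r [LinearOrder α] (A : Set α) (x y : α) : Prop :=
  (x ∈ A ∧ y ∈ A ∧ y < x) ∨ (x ∈ A ∧ y ∉ A) ∨ (x ∉ A ∧ y ∉ A ∧ x < y)

section Order
variable [LinearOrder α]

lemma r_irrefl (A : Set α) (x : α) : ¬ r A x x := by
  rintro (⟨_, _, h⟩ | ⟨h1, h2⟩ | ⟨_, _, h⟩) <;> first | exact lt_irrefl _ h | exact h2 h1

lemma r_trans (h1 : r A x y) (h2 : r A y z) : r A x z := by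
  rcases h1 with ⟨hx, hy, hlt⟩ | ⟨hx, hy⟩ | ⟨hx, hy, hlt⟩ <;>
    rcases h2 with ⟨hy', hz, hlt'⟩ | ⟨hy', hz⟩ | ⟨hy', hz, hlt'⟩ <;>
      first
        | exact absurd hy' hy
        | exact absurd hy hy'
        | exact Or.inl ⟨hx, hz, hlt'.trans hlt⟩
        | exact Or.inr (Or.inl ⟨hx, hz⟩)
        | exact Or.inr (Or.inr ⟨hx, hz, hlt.trans hlt'⟩)

lemma r_asymm (h1 : r A x y) : ¬ r A y x := by
  intro h2; exact r_irrefl A x (r_trans h1 h2)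

lemma r_total (hne : x ≠ y) : r A x y ∨ r A y x := by
  by_cases hx : x ∈ A <;> by_cases hy : y ∈ A
  · rcases hne.lt_or_gt with h | h
    · exact Or.inr (Or.inl ⟨hy, hx, h⟩)
    · exact Or.inl (Or.inl ⟨hx, hy, h⟩)
  · exact Or.inl (Or.inr (Or.inl ⟨hx, hy⟩))
  · exact Or.inr (Or.inr (Or.inl ⟨hy, hx⟩))
  · rcases hne.lt_or_gt with h | h
    · exact Or.inl (Or.inr (Or.inr ⟨hx, hy, h⟩))
    · exact Or.inr (Or.inr (Or.inr ⟨hy, hx, h⟩))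

end Order

/-! ### Circuit basics -/

lemma circuit_mem_closure_diff (hC : Circuit M C) (hc : c ∈ C) : c ∈ M.closure (C \ {c}) := by
  have hind : M.Indep (C \ {c}) := hC.2 _ (sdiff_singleton_ssubset.2 hc)
  rw [hind.mem_closure_iff]
  left
  rw [insert_diff_singleton, insert_eq_self.mpr hc]
  exact hC.1

lemma exists_circuit_subset (hD : M.Dep D) (hfin : D.Finite) : ∃ C, C ⊆ D ∧ Circuit M C := by
  have hS : {C : Set α | C ⊆ D ∧ M.Dep C}.Finite :=
    hfin.finite_subsets.subset (fun C hC => hC.1)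
  obtain ⟨C, hC, hmin⟩ := hS.exists_minimalFor id _ ⟨D, Subset.rfl, hD⟩
  refine ⟨C, hC.1, hC.2, fun D' hD' => ?_⟩
  have hD'E : D' ⊆ M.E := hD'.subset.trans hC.2.subset_ground
  by_contra hnind
  have hdep : M.Dep D' := (Matroid.not_indep_iff hD'E).1 hnind
  exact hD'.ne (hD'.subset.antisymm (hmin ⟨hD'.subset.trans hC.1, hdep⟩ hD'.subset))

lemma mem_circuit_of_subset_insert (hB : M.IsBase B) (heB : e ∉ B) (hC : Circuit M C)
    (hCB : C ⊆ insert e B) : e ∈ C := by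
  by_contra heC
  exact hC.1.not_indep (hB.indep.subset fun x hx => ((hCB hx).resolve_left
    (by rintro rfl; exact heC hx)))

lemma circuit_exchange (hB : M.IsBase B) (heE : e ∈ M.E) (heB : e ∉ B) (hC : Circuit M C)
    (hCB : C ⊆ insert e B) (hc : c ∈ C) (hce : c ≠ e) : M.IsBase (insert e (B \ {c})) := by
  have hcB : c ∈ B := (hCB hc).resolve_left hce
  have hBd : M.Indep (B \ {c}) := hB.indep.subset diff_subset
  have hecl : e ∉ M.closure (B \ {c}) := by
    intro he
    have h1 : C \ {c} ⊆ M.closure (B \ {c}) := by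
      rintro x ⟨hx, hxc⟩
      rcases hCB hx with rfl | hxB
      · exact he
      · exact M.subset_closure _ (diff_subset.trans hB.subset_ground) ⟨hxB, hxc⟩
    have h3 : c ∈ M.closure (B \ {c}) :=
      M.closure_subset_closure_of_subset_closure h1 (circuit_mem_closure_diff hC hc)
    exact (Matroid.indep_iff_forall_notMem_closure_diff hB.subset_ground).1 hB.indep hcB h3
  have hind : M.Indep (insert e (B \ {c})) := by
    rw [hBd.insert_indep_iff_of_notMem (fun h => heB h.1)]
    exact ⟨heE, hecl⟩
  exact hB.exchange_isBase_of_indep heB hind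

lemma circuit_subset_of_subset_insert (hB : M.IsBase B) (heE : e ∈ M.E) (heB : e ∉ B)
    (hC1 : Circuit M C) (hC1B : C ⊆ insert e B) (hC2 : Circuit M D) (hC2B : D ⊆ insert e B) :
    C ⊆ D := by
  intro c hc
  by_contra hcD
  have hce : c ≠ e := by rintro rfl; exact hcD (mem_circuit_of_subset_insert hB heB hC2 hC2B)
  have hbase := circuit_exchange hB heE heB hC1 hC1B hc hce
  refine hC2.1.not_indep (hbase.indep.subset fun x hx => ?_)
  rcases hC2B hx with rfl | hxB
  · exact mem_insert _ _
  · exact mem_insert_of_mem _ ⟨hxB, fun h => hcD (h ▸ hx)⟩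

lemma circuit_unique (hB : M.IsBase B) (heE : e ∈ M.E) (heB : e ∉ B)
    (hC1 : Circuit M C) (hC1B : C ⊆ insert e B) (hC2 : Circuit M D) (hC2B : D ⊆ insert e B) :
    C = D :=
  (circuit_subset_of_subset_insert hB heE heB hC1 hC1B hC2 hC2B).antisymm
    (circuit_subset_of_subset_insert hB heE heB hC2 hC2B hC1 hC1B)


/-! ### Pivot lemmas relating circuits and cocircuits -/

lemma compl_exchange_eq (hB : B ⊆ M.E) (hbB : b ∈ B) (heE : e ∈ M.E) (heB : e ∉ B)
    (hbe : b ≠ e) : M.E \ insert e (B \ {b}) = insert b ((M.E \ B) \ {e}) := by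
  ext x
  simp only [mem_diff, mem_insert_iff, mem_singleton_iff]
  constructor
  · rintro ⟨hxE, hx⟩
    by_cases hxb : x = b
    · exact Or.inl hxb
    · exact Or.inr ⟨⟨hxE, fun hxB => hx (Or.inr ⟨hxB, hxb⟩)⟩, fun hxe => hx (Or.inl hxe)⟩
  · rintro (rfl | ⟨⟨hxE, hxB⟩, hxe⟩)
    · exact ⟨hB hbB, fun h => by rcases h with rfl | ⟨-, hbb⟩; exacts [hbe rfl, hbb rfl]⟩
    · exact ⟨hxE, fun h => by rcases h with rfl | ⟨hxB', -⟩; exacts [hxe rfl, hxB hxB']⟩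

lemma pivot1 (hB : M.IsBase B) (heE : e ∈ M.E) (heB : e ∉ B) (hC : Circuit M C)
    (hCB : C ⊆ insert e B) (hb : b ∈ C) (hbe : b ≠ e) (hK : Circuit M✶ K)
    (hKB : K ⊆ insert b (M.E \ B)) : e ∈ K := by
  have hbB : b ∈ B := (hCB hb).resolve_left hbe
  have hB2 : M.IsBase (insert e (B \ {b})) := circuit_exchange hB heE heB hC hCB hb hbe
  have hdual : M✶.IsBase (M.E \ insert e (B \ {b})) := hB2.compl_isBase_dual
  rw [compl_exchange_eq hB.subset_ground hbB heE heB hbe] at hdual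
  by_contra heK
  refine hK.1.not_indep (hdual.indep.subset fun x hx => ?_)
  rcases hKB hx with rfl | hxB
  · exact mem_insert _ _
  · exact mem_insert_of_mem _ ⟨hxB, fun h => heK (h ▸ hx)⟩

lemma pivot2 (hB : M.IsBase B) (hbB : b ∈ B) (hK : Circuit M✶ K)
    (hKB : K ⊆ insert b (M.E \ B)) (hx : x ∈ K) (hxb : x ≠ b) (hC : Circuit M C)
    (hCB : C ⊆ insert x B) : b ∈ C := by
  have hBd : M✶.IsBase (M.E \ B) := hB.compl_isBase_dual
  have hbE : b ∈ M.E := hB.subset_ground hbB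
  have hxEB : x ∈ M.E \ B := (hKB hx).resolve_left hxb
  have hbP : b ∉ M.E \ B := fun h => h.2 hbB
  have hb2 : M✶.IsBase (insert b ((M.E \ B) \ {x})) :=
    circuit_exchange (M := M✶) hBd hbE hbP hK hKB hx hxb
  have hB3 : M.IsBase (M.E \ insert b ((M.E \ B) \ {x})) := hb2.compl_isBase_of_dual
  have hset : M.E \ insert b ((M.E \ B) \ {x}) = insert x ((M.E \ (M.E \ B)) \ {b}) :=
    compl_exchange_eq diff_subset hxEB hbE hbP hxb
  rw [hset, diff_diff_cancel_left hB.subset_ground] at hB3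
  by_contra hbC
  refine hC.1.not_indep (hB3.indep.subset fun y hy => ?_)
  rcases hCB hy with rfl | hyB
  · exact mem_insert _ _
  · exact mem_insert_of_mem _ ⟨hyB, fun h => hbC (h ▸ hy)⟩

/-! ### Weights and greedy-minimal bases -/

section Weighted
variable [LinearOrder α]

noncomputable def w (M : Matroid α) (A : Set α) (x : α) : ℕ := {z ∈ M.E | r A z x}.ncard

lemma w_lt [M.Finite] (hx : x ∈ M.E) (hr : r A x y) : w M A x < w M A y := by
  have hsub : {z ∈ M.E | r A z x} ⊆ {z ∈ M.E | r A z y} :=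
    fun z hz => ⟨hz.1, r_trans hz.2 hr⟩
  refine Set.ncard_lt_ncard ((ssubset_iff_of_subset hsub).2 ⟨x, ⟨hx, hr⟩, fun hmem => r_irrefl A x hmem.2⟩)
    (M.ground_finite.subset (sep_subset _ _))

noncomputable def wt (M : Matroid α) [M.Finite] (A : Set α) (X : Set α) : ℕ :=
  ∑ x ∈ (M.ground_finite.inter_of_right X).toFinset, w M A x

lemma wt_exchange [M.Finite] (hBE : B ⊆ M.E) (heE : e ∈ M.E) (heB : e ∉ B) (hcB : c ∈ B)
    (hw : w M A e < w M A c) : wt M A (insert e (B \ {c})) < wt M A B := by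
  classical
  simp only [wt]
  have hT : (M.ground_finite.inter_of_right (insert e (B \ {c}))).toFinset =
      insert e ((M.ground_finite.inter_of_right B).toFinset.erase c) := by
    ext x
    simp only [Set.Finite.mem_toFinset, Finset.mem_insert, Finset.mem_erase, mem_inter_iff,
      mem_insert_iff, mem_diff, mem_singleton_iff]
    constructor
    · rintro ⟨rfl | ⟨hxB, hxc⟩, hxE⟩
      · exact Or.inl rfl
      · exact Or.inr ⟨hxc, hxB, hxE⟩
    · rintro (rfl | ⟨hxc, hxB, hxE⟩)
      · exact ⟨Or.inl rfl, heE⟩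
      · exact ⟨Or.inr ⟨hxB, hxc⟩, hxE⟩
  rw [hT]
  have heT : e ∉ (M.ground_finite.inter_of_right B).toFinset.erase c := by
    simp [heB]
  have hcT : c ∈ (M.ground_finite.inter_of_right B).toFinset := by
    simp [hcB, hBE hcB]
  rw [Finset.sum_insert heT]
  have hsum := Finset.sum_erase_add ((M.ground_finite.inter_of_right B).toFinset) (w M A) hcT
  omega

lemma exists_min_base (M : Matroid α) [M.Finite] (A : Set α) :
    ∃ B, M.IsBase B ∧ ∀ B', M.IsBase B' → wt M A B ≤ wt M A B' := by
  classical
  have hex : ∃ n, ∃ B, M.IsBase B ∧ wt M A B = n := by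
    obtain ⟨B, hB⟩ := M.exists_isBase
    exact ⟨_, B, hB, rfl⟩
  obtain ⟨B, hB, hwt⟩ := Nat.find_spec hex
  exact ⟨B, hB, fun B' hB' => hwt ▸ Nat.find_min' hex ⟨B', hB', rfl⟩⟩

/-! ### The `Good` property -/

def Good (M : Matroid α) (A B : Set α) : Prop :=
  ∀ ⦃e⦄, e ∈ M.E → e ∉ B → ∀ ⦃C⦄, Circuit M C → C ⊆ insert e B →
    ∀ ⦃c⦄, c ∈ C → c ≠ e → r A c e

lemma good_of_min [M.Finite] (hB : M.IsBase B)
    (hmin : ∀ B', M.IsBase B' → wt M A B ≤ wt M A B') : Good M A B := by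
  intro e heE heB C hC hCB c hcC hce
  by_contra hr
  have hrec : r A e c := (r_total (Ne.symm hce)).resolve_right hr
  have hcB : c ∈ B := (hCB hcC).resolve_left hce
  have hB2 := circuit_exchange hB heE heB hC hCB hcC hce
  have hwlt := w_lt (M := M) heE hrec
  have hwte := wt_exchange (A := A) hB.subset_ground heE heB hcB hwlt
  exact absurd (hmin _ hB2) (by omega)

lemma interval_of_good [M.Finite] (hA : A ⊆ M.E) (hB : M.IsBase B) (hG : Good M A B) :
    B \ IntSet M B ⊆ A ∧ A ⊆ B ∪ ExtSet M B := by
  constructor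
  · intro b hb
    by_contra hbA
    refine hb.2 (show IntActive M B b from ?_)
    have hbB := hb.1
    have hbE := hB.subset_ground hbB
    have hBd := hB.compl_isBase_dual
    have hbP : b ∉ M.E \ B := fun h => h.2 hbB
    have hdep : M✶.Dep (insert b (M.E \ B)) := hBd.insert_dep ⟨hbE, hbP⟩
    obtain ⟨K, hKB, hK⟩ := exists_circuit_subset hdep
      (M.ground_finite.subset (insert_subset hbE diff_subset))
    have hbK := mem_circuit_of_subset_insert (M := M✶) hBd hbP hK hKB
    refine ⟨hbB, K, hK, by rwa [union_singleton], hbK, fun x hx => ?_⟩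
    by_cases hxb : x = b
    · exact le_of_eq hxb.symm
    have hxEB : x ∈ M.E \ B := (hKB hx).resolve_left hxb
    have hdepx : M.Dep (insert x B) := hB.insert_dep hxEB
    obtain ⟨C, hCB, hC⟩ := exists_circuit_subset hdepx
      (M.ground_finite.subset (insert_subset hxEB.1 hB.subset_ground))
    have hbC : b ∈ C := pivot2 hB hbB hK hKB hx hxb hC hCB
    have hbx : b ≠ x := fun h => hxb h.symm
    rcases hG hxEB.1 hxEB.2 hC hCB hbC hbx with ⟨hbA', -, -⟩ | ⟨hbA', -⟩ | ⟨-, -, hlt⟩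
    · exact absurd hbA' hbA
    · exact absurd hbA' hbA
    · exact hlt.le
  · intro e he
    by_cases heB : e ∈ B
    · exact Or.inl heB
    have heE := hA he
    have hdep := hB.insert_dep ⟨heE, heB⟩
    obtain ⟨C, hCB, hC⟩ := exists_circuit_subset hdep
      (M.ground_finite.subset (insert_subset heE hB.subset_ground))
    have heC := mem_circuit_of_subset_insert hB heB hC hCB
    refine Or.inr (show ExtActive M B e from
      ⟨⟨heE, heB⟩, C, hC, by rwa [union_singleton], heC, fun x hx => ?_⟩)
    by_cases hxe : x = e
    · exact le_of_eq hxe.symm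
    rcases hG heE heB hC hCB hx hxe with ⟨-, -, hlt⟩ | ⟨-, heA⟩ | ⟨-, heA, -⟩
    · exact hlt.le
    · exact absurd he heA
    · exact absurd he heA

lemma good_of_interval [M.Finite] (hB : M.IsBase B) (h1 : B \ IntSet M B ⊆ A)
    (h2 : A ⊆ B ∪ ExtSet M B) : Good M A B := by
  intro e heE heB C hC hCB c hcC hce
  have hcB : c ∈ B := (hCB hcC).resolve_left hce
  have hext : e ∈ A → e < c := by
    intro heA
    rcases h2 heA with heB' | hExt
    · exact absurd heB' heB
    obtain ⟨-, C₀, hC₀, hC₀B, heC₀, hmin⟩ := hExt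
    rw [union_singleton] at hC₀B
    have hCeq : C₀ = C := circuit_unique hB heE heB hC₀ hC₀B hC hCB
    exact lt_of_le_of_ne (hmin c (hCeq ▸ hcC)) fun h => hce h.symm
  by_cases hcA : c ∈ A
  · by_cases heA : e ∈ A
    · exact Or.inl ⟨hcA, heA, hext heA⟩
    · exact Or.inr (Or.inl ⟨hcA, heA⟩)
  · have hcInt : IntActive M B c := by
      by_contra h
      exact hcA (h1 ⟨hcB, h⟩)
    obtain ⟨-, K, hK, hKB, hcK, hmin⟩ := hcInt
    rw [union_singleton] at hKB
    have heK : e ∈ K := pivot1 hB heE heB hC hCB hcC hce hK hKB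
    have hclt : c < e := lt_of_le_of_ne (hmin e heK) hce
    by_cases heA : e ∈ A
    · exact absurd hclt (lt_asymm (hext heA))
    · exact Or.inr (Or.inr ⟨hcA, heA, hclt⟩)

/-! ### Uniqueness -/

lemma helper [M.Finite] (hB : M.IsBase B) (hB' : M.IsBase B') (hG : Good M A B)
    (he : e ∈ B' \ B) (hmin : ∀ x ∈ (B \ B') ∪ (B' \ B), w M A e ≤ w M A x) : False := by
  have heE := hB'.subset_ground he.1
  have hdep := hB.insert_dep ⟨heE, he.2⟩
  obtain ⟨C, hCB, hC⟩ := exists_circuit_subset hdep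
    (M.ground_finite.subset (insert_subset heE hB.subset_ground))
  have hex : ∃ c ∈ C, c ∉ B' := by
    by_contra h
    push_neg at h
    exact hC.1.not_indep (hB'.indep.subset h)
  obtain ⟨c, hcC, hcB'⟩ := hex
  have hce : c ≠ e := fun h => hcB' (h ▸ he.1)
  have hcB : c ∈ B := (hCB hcC).resolve_left hce
  have hr : r A c e := hG heE he.2 hC hCB hcC hce
  have hlt : w M A c < w M A e := w_lt (hB.subset_ground hcB) hr
  exact absurd (hmin c (Or.inl ⟨hcB, hcB'⟩)) (by omega)

lemma base_eq_of_good [M.Finite] (hB : M.IsBase B) (hB' : M.IsBase B') (hG : Good M A B)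
    (hG' : Good M A B') : B = B' := by
  by_contra hne
  have hSne : ((B \ B') ∪ (B' \ B)).Nonempty := by
    rw [Set.nonempty_iff_ne_empty]
    intro h
    rw [union_empty_iff] at h
    exact hne (subset_antisymm (diff_eq_empty.1 h.1) (diff_eq_empty.1 h.2))
  have hfin : ((B \ B') ∪ (B' \ B)).Finite :=
    ((M.ground_finite.subset hB.subset_ground).diff).union
      ((M.ground_finite.subset hB'.subset_ground).diff)
  obtain ⟨e, heS, hemin⟩ := hfin.toFinset.exists_min_image (w M A)
    (by rwa [Set.Finite.toFinset_nonempty])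
  have hmin' : ∀ x ∈ (B \ B') ∪ (B' \ B), w M A e ≤ w M A x :=
    fun x hx => hemin x (hfin.mem_toFinset.2 hx)
  rcases hfin.mem_toFinset.1 heS with he | he
  · exact helper hB' hB hG' he fun x hx => by
      rcases hx with h | h
      · exact hmin' x (Or.inr h)
      · exact hmin' x (Or.inl h)
  · exact helper hB hB' hG he hmin'

end Weighted
end StmtAux

/-- The boolean intervals `[B \ Int(B), B ∪ Ext(B)]` over bases `B`
partition the power set of the ground set: every `A ⊆ E` lies in exactly one of them. -/
theorem stmt_5 {α : Type*} [LinearOrder α] (M : Matroid α) [M.Finite]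
    (A : Set α) (hA : A ⊆ M.E) :
    ∃! B : Set α, M.IsBase B ∧ B \ AB.IntSet M B ⊆ A ∧ A ⊆ B ∪ AB.ExtSet M B := by
  obtain ⟨B, hB, hmin⟩ := StmtAux.exists_min_base M A
  have hG := StmtAux.good_of_min hB hmin
  obtain ⟨h1, h2⟩ := StmtAux.interval_of_good hA hB hG
  refine ⟨B, ⟨hB, h1, h2⟩, ?_⟩
  rintro B' ⟨hB', h1', h2'⟩
  exact StmtAux.base_eq_of_good hB' hB (StmtAux.good_of_interval hB' h1' h2') hG
end

section
/- Let M be a matroid on a finite linearly ordered set E, let B be a basis of M, and let A be a subset with B \ Int(B) ⊆ A ⊆ B ∪ Ext(B). Then |P_M(A)| = r(M) − r_M(A) and |Q_M(A)| = |A| − r_M(A), where P_M(A) = Int(B) \ A and Q_M(A) = Ext(B) ∩ A. -/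
namespace AB
/-- The rank of a set `X` in a matroid `M`: the largest cardinality of an
independent subset of `X`. -/
noncomputable def rank {α : Type*} (M : Matroid α) (X : Set α) : ℕ :=
  sSup {n : ℕ | ∃ I, I ⊆ X ∧ M.Indep I ∧ I.ncard = n}
end AB

namespace AB
open Set

variable {α : Type*} {M : Matroid α}

lemma Circuit.diff_indep {C : Set α} (hC : Circuit M C) {e : α} (he : e ∈ C) :
    M.Indep (C \ {e}) :=
  hC.2 _ (sdiff_singleton_ssubset.2 he)

lemma Circuit.mem_closure_diff {C : Set α} (hC : Circuit M C) {e : α} (he : e ∈ C) :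
    e ∈ M.closure (C \ {e}) := by
  have hi := hC.diff_indep he
  have h1 : insert e (C \ {e}) = C := by rw [insert_diff_singleton, insert_eq_of_mem he]
  exact hi.mem_closure_iff.2 (Or.inl (by rw [h1]; exact hC.1))

lemma Cocircuit.not_mem_closure_compl {C : Set α} (hC : Cocircuit M C) {x : α} (hx : x ∈ C) :
    x ∉ M.closure (M.E \ C) := by
  intro hmem
  have hCE : C ⊆ M.E := hC.1.subset_ground
  have hind : M✶.Indep (C \ {x}) := hC.2 _ (sdiff_singleton_ssubset.2 hx)
  rw [Matroid.dual_indep_iff_exists'] at hind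
  obtain ⟨-, B0, hB0, hdis⟩ := hind
  have hsub : B0 ⊆ insert x (M.E \ C) := by
    intro y hy
    by_cases hyC : y ∈ C
    · have : y ∉ C \ {x} := fun h => (hdis.ne_of_mem h hy) rfl
      simp only [mem_diff, hyC, true_and, not_not, mem_singleton_iff] at this
      exact Or.inl this
    · exact Or.inr ⟨hB0.subset_ground hy, hyC⟩
  have hins : insert x (M.E \ C) ⊆ M.closure (M.E \ C) := by
    exact insert_subset hmem (M.subset_closure _ diff_subset)
  have hspan : M.closure (M.E \ C) = M.E := by
    apply subset_antisymm (M.closure_subset_ground _)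
    calc M.E = M.closure B0 := hB0.closure_eq.symm
    _ ⊆ M.closure (M.closure (M.E \ C)) := M.closure_subset_closure (hsub.trans hins)
    _ = M.closure (M.E \ C) := M.closure_closure _
  have hsp : M.Spanning (M.E \ C) := by
    rw [Matroid.spanning_iff_closure_eq diff_subset]; exact hspan
  obtain ⟨B1, hB1, hB1sub⟩ := hsp.exists_isBase_subset
  exact hC.1.not_indep (Matroid.dual_indep_iff_exists'.2
    ⟨hCE, B1, hB1, disjoint_sdiff_left.mono_left hB1sub |>.symm⟩)

lemma rank_eq_of_basis [M.Finite] {I X : Set α} (h : M.IsBasis I X) : rank M X = I.ncard := by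
  have hfin : ∀ J : Set α, M.Indep J → J.Finite :=
    fun J hJ => M.ground_finite.subset hJ.subset_ground
  apply le_antisymm
  · have hne : {n : ℕ | ∃ I0, I0 ⊆ X ∧ M.Indep I0 ∧ I0.ncard = n}.Nonempty :=
      ⟨I.ncard, I, h.subset, h.indep, rfl⟩
    apply csSup_le hne
    rintro n ⟨J, hJX, hJ, rfl⟩
    obtain ⟨I', hI', hJI'⟩ := hJ.subset_isBasis_of_subset hJX h.subset_ground
    have hcard : I'.encard = I.encard := hI'.encard_eq_encard h
    calc J.ncard ≤ I'.ncard := ncard_le_ncard hJI' (hfin _ hI'.indep)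
    _ = I.ncard := by rw [ncard_def, hcard, ← ncard_def]
  · refine le_csSup ⟨M.E.ncard, ?_⟩ ⟨I, h.subset, h.indep, rfl⟩
    rintro n ⟨J, hJX, hJ, rfl⟩
    exact ncard_le_ncard hJ.subset_ground M.ground_finite

end AB

/-- If `B` is a basis and `B \ Int(B) ⊆ A ⊆ B ∪ Ext(B)`, then
`|P_M(A)| = r(M) - r_M(A)` and `|Q_M(A)| = |A| - r_M(A)`, where
`P_M(A) = Int(B) \ A` and `Q_M(A) = Ext(B) ∩ A`. -/
theorem stmt_6 {α : Type*} [LinearOrder α] (M : Matroid α) [M.Finite]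
    (B : Set α) (hB : M.IsBase B) (A : Set α)
    (h1 : B \ AB.IntSet M B ⊆ A) (h2 : A ⊆ B ∪ AB.ExtSet M B) :
    (AB.IntSet M B \ A).ncard = AB.rank M M.E - AB.rank M A ∧
      (AB.ExtSet M B ∩ A).ncard = A.ncard - AB.rank M A := by
  classical
  have hBE : B ⊆ M.E := hB.subset_ground
  have hAE : A ⊆ M.E := by
    intro a ha
    rcases h2 ha with h | h
    · exact hBE h
    · exact h.1.1
  -- every element of A \ B is in the closure of A ∩ B
  have hstep : ∀ e ∈ A \ B, e ∈ M.closure (A ∩ B) := by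
    rintro e ⟨heA, heB⟩
    have hext : AB.ExtActive M B e := (h2 heA).resolve_left heB
    obtain ⟨⟨heE, -⟩, C, hC, hCsub, heC, hmin⟩ := hext
    have hCAB : C \ {e} ⊆ A ∩ B := by
      rintro b ⟨hbC, hbe⟩
      have hbe' : b ≠ e := hbe
      have hbB : b ∈ B := by
        rcases hCsub hbC with h | h
        · exact h
        · exact absurd h hbe
      have hbA : b ∈ A := by
        refine h1 ⟨hbB, fun hbint => ?_⟩
        obtain ⟨-, Cs, hCs, hCssub, hbCs, hbmin⟩ := hbint
        by_cases heCs : e ∈ Cs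
        · exact hbe' (le_antisymm (hbmin e heCs) (hmin b hbC))
        · -- C \ {b} ⊆ M.E \ Cs
          have hsub : C \ {b} ⊆ M.E \ Cs := by
            rintro y ⟨hyC, hyb⟩
            refine ⟨hC.1.subset_ground hyC, fun hyCs => ?_⟩
            rcases hCssub hyCs with h' | h'
            · rcases hCsub hyC with h'' | h''
              · exact h'.2 h''
              · exact heCs (h'' ▸ hyCs)
            · exact hyb h'
          exact hCs.not_mem_closure_compl hbCs
            (M.closure_subset_closure hsub (hC.mem_closure_diff hbC))
      exact ⟨hbA, hbB⟩
    exact M.closure_subset_closure hCAB (hC.mem_closure_diff heC)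
  have hABindep : M.Indep (A ∩ B) := hB.indep.subset Set.inter_subset_right
  have hbasis : M.IsBasis (A ∩ B) A := by
    refine hABindep.isBasis_of_subset_of_subset_closure Set.inter_subset_left fun a ha => ?_
    by_cases haB : a ∈ B
    · exact M.subset_closure _ (Set.inter_subset_left.trans hAE) ⟨ha, haB⟩
    · exact hstep a ⟨ha, haB⟩
  have hrA : AB.rank M A = (A ∩ B).ncard := AB.rank_eq_of_basis hbasis
  have hrE : AB.rank M M.E = B.ncard := AB.rank_eq_of_basis hB.isBasis_ground
  have hBfin : B.Finite := M.ground_finite.subset hBE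
  have hAfin : A.Finite := M.ground_finite.subset hAE
  have hP : AB.IntSet M B \ A = B \ A := by
    apply subset_antisymm
    · rintro x ⟨hx, hxA⟩; exact ⟨hx.1, hxA⟩
    · rintro x ⟨hxB, hxA⟩
      refine ⟨?_, hxA⟩
      by_contra hxint
      exact hxA (h1 ⟨hxB, hxint⟩)
  have hQ : AB.ExtSet M B ∩ A = A \ B := by
    apply subset_antisymm
    · rintro x ⟨hx, hxA⟩; exact ⟨hxA, hx.1.2⟩
    · rintro x ⟨hxA, hxB⟩
      exact ⟨(h2 hxA).resolve_left hxB, hxA⟩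
  have hBdiff : B \ A = B \ (A ∩ B) := by ext x; simp only [Set.mem_diff, Set.mem_inter_iff]; tauto
  have hAdiff : A \ B = A \ (A ∩ B) := by ext x; simp only [Set.mem_diff, Set.mem_inter_iff]; tauto
  constructor
  · rw [hP, hrE, hrA, hBdiff, Set.ncard_diff Set.inter_subset_right (hBfin.subset Set.inter_subset_right)]
  · rw [hQ, hrA, hAdiff, Set.ncard_diff Set.inter_subset_left (hAfin.subset Set.inter_subset_left)]
end

section
/- Let M be a matroid on a finite linearly ordered set E. Then in the polynomial ring ℤ[x,u,y,v], t(M; x+u, y+v) = Σ_{A ⊆ E} x^{|Int_M(A)|} u^{|P_M(A)|} y^{|Ext_M(A)|} v^{|Q_M(A)|}, where for each A ⊆ E, B is the unique basis with B \ Int(B) ⊆ A ⊆ B ∪ Ext(B), and Int_M(A) = Int(B) ∩ A, P_M(A) = Int(B) \ A, Ext_M(A) = Ext(B) \ A, Q_M(A) = Ext(B) ∩ A. -/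
attribute [local instance] Classical.propDecidable

section Aux

open AB

variable {α : Type*} [Fintype α] [LinearOrder α] {M : Matroid α}

/-- One-sided contradiction used in the disjointness proof, with `e` the maximum of the
symmetric difference, `e ∈ B₁ \ B₂`. -/
lemma aux_case (hE : M.E = Set.univ) {B₁ B₂ : Set α} (hB₁ : M.IsBase B₁) (hB₂ : M.IsBase B₂)
    {A : Set α} (h₁l : B₁ \ IntSet M B₁ ⊆ A) (h₂u : A ⊆ B₂ ∪ ExtSet M B₂)
    {e : α} (he₁ : e ∈ B₁) (he₂ : e ∉ B₂)
    (hmax : ∀ x, ((x ∈ B₁ ∧ x ∉ B₂) ∨ (x ∈ B₂ ∧ x ∉ B₁)) → x ≤ e) : False := by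
  by_cases heA : e ∈ A
  · have hext : e ∈ ExtSet M B₂ := (h₂u heA).resolve_left he₂
    obtain ⟨-, C, hC, hCsub, heC, hmin⟩ := hext
    have hCB₁ : C ⊆ B₁ := by
      intro x hx
      rcases hCsub hx with hxB₂ | hxe
      · by_contra hxB₁
        have h1 : x ≤ e := hmax x (Or.inr ⟨hxB₂, hxB₁⟩)
        have h2 : e ≤ x := hmin x hx
        exact he₂ (le_antisymm h1 h2 ▸ hxB₂)
      · exact (Set.mem_singleton_iff.mp hxe) ▸ he₁
    exact hC.1.not_indep (hB₁.indep.subset hCB₁)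
  · have hint : e ∈ IntSet M B₁ := by
      by_contra h; exact heA (h₁l ⟨he₁, h⟩)
    obtain ⟨-, D, hD, hDsub, heD, hmin⟩ := hint
    have hDsub₂ : D ⊆ M.E \ B₂ := by
      intro x hx
      rcases hDsub hx with ⟨hxE, hxB₁⟩ | hxe
      · refine ⟨hxE, fun hxB₂ => ?_⟩
        exact hxB₁ (le_antisymm (hmax x (Or.inr ⟨hxB₂, hxB₁⟩)) (hmin x hx) ▸ he₁)
      · exact (Set.mem_singleton_iff.mp hxe) ▸ ⟨hE ▸ Set.mem_univ e, he₂⟩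
    exact hD.1.not_indep (hB₂.compl_isBase_dual.indep.subset hDsub₂)

/-- Disjointness of the basis intervals: a set `A` lies in the interval of at most one basis. -/
lemma interval_unique (hE : M.E = Set.univ) {B₁ B₂ : Set α} (hB₁ : M.IsBase B₁) (hB₂ : M.IsBase B₂)
    {A : Set α}
    (h₁l : B₁ \ IntSet M B₁ ⊆ A) (h₁u : A ⊆ B₁ ∪ ExtSet M B₁)
    (h₂l : B₂ \ IntSet M B₂ ⊆ A) (h₂u : A ⊆ B₂ ∪ ExtSet M B₂) : B₁ = B₂ := by
  by_contra hne
  set Δ : Finset α := Finset.univ.filter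
    (fun x => (x ∈ B₁ ∧ x ∉ B₂) ∨ (x ∈ B₂ ∧ x ∉ B₁)) with hΔ
  have hΔne : Δ.Nonempty := by
    by_contra hΔe
    rw [Finset.not_nonempty_iff_eq_empty] at hΔe
    apply hne
    ext x
    have hx : x ∉ Δ := hΔe ▸ Finset.notMem_empty x
    simp only [hΔ, Finset.mem_filter, Finset.mem_univ, true_and] at hx
    push_neg at hx
    exact ⟨hx.1, hx.2⟩
  set e := Δ.max' hΔne with he
  have heΔ : e ∈ Δ := Δ.max'_mem hΔne
  have hmax : ∀ x, ((x ∈ B₁ ∧ x ∉ B₂) ∨ (x ∈ B₂ ∧ x ∉ B₁)) → x ≤ e := by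
    intro x hx
    exact Δ.le_max' x (by simp [hΔ, hx])
  simp only [hΔ, Finset.mem_filter, Finset.mem_univ, true_and] at heΔ
  rcases heΔ with ⟨he₁, he₂⟩ | ⟨he₂, he₁⟩
  · exact aux_case hE hB₁ hB₂ h₁l h₂u he₁ he₂ hmax
  · exact aux_case hE hB₂ hB₁ h₂l h₁u he₂ he₁
      (fun x hx => hmax x (Or.symm hx))

end Aux

open MvPolynomial in
/-- In `ℤ[x,u,y,v]` (variables `X 0 = x`, `X 1 = u`, `X 2 = y`, `X 3 = v`):
`t(M; x+u, y+v) = Σ_{A ⊆ E} x^|Int_M(A)| u^|P_M(A)| y^|Ext_M(A)| v^|Q_M(A)|`,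
where `t` is the Tutte polynomial expressed via basis activities (Crapo's theorem),
and for each subset `A`, `b A` is the unique basis with `b A \ Int(b A) ⊆ A ⊆ b A ∪ Ext(b A)`,
and `Int_M(A) = Int(B) ∩ A`, `P_M(A) = Int(B) \ A`, `Ext_M(A) = Ext(B) \ A`,
`Q_M(A) = Ext(B) ∩ A` for `B = b A`. -/
theorem stmt_7 {α : Type*} [Fintype α] [LinearOrder α] (M : Matroid α)
    (hE : M.E = Set.univ)
    (b : Finset α → Set α)
    (hb : ∀ A : Finset α, M.IsBase (b A) ∧
      b A \ AB.IntSet M (b A) ⊆ ↑A ∧ ↑A ⊆ b A ∪ AB.ExtSet M (b A)) :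
    (∑ B ∈ Finset.univ.powerset.filter (fun B : Finset α => M.IsBase ↑B),
        (X 0 + X 1 : MvPolynomial (Fin 4) ℤ) ^ (AB.IntSet M ↑B).ncard *
          (X 2 + X 3) ^ (AB.ExtSet M ↑B).ncard)
      =
    ∑ A ∈ (Finset.univ : Finset α).powerset,
        (X 0 : MvPolynomial (Fin 4) ℤ) ^ (AB.IntSet M (b A) ∩ ↑A).ncard *
          X 1 ^ (AB.IntSet M (b A) \ ↑A).ncard *
          X 2 ^ (AB.ExtSet M (b A) \ ↑A).ncard *
          X 3 ^ (AB.ExtSet M (b A) ∩ ↑A).ncard := by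
  classical
  set g : Finset α → Finset α := fun A => Finset.univ.filter (· ∈ b A) with hg
  have hgcoe : ∀ A, (↑(g A) : Set α) = b A := by
    intro A; ext x; simp [hg]
  have hmaps : ∀ A ∈ (Finset.univ : Finset α).powerset,
      g A ∈ Finset.univ.powerset.filter (fun B : Finset α => M.IsBase ↑B) := by
    intro A _
    simp only [Finset.mem_filter, Finset.mem_powerset]
    exact ⟨Finset.subset_univ _, (hgcoe A) ▸ (hb A).1⟩
  rw [← Finset.sum_fiberwise_of_maps_to hmaps]
  refine Finset.sum_congr rfl ?_
  intro B hB
  simp only [Finset.mem_filter, Finset.mem_powerset] at hB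
  have hBbase : M.IsBase ↑B := hB.2
  -- the fiber over B is exactly the interval of B
  have hfiber : ∀ A : Finset α, (g A = B) ↔
      (↑B \ AB.IntSet M ↑B ⊆ (↑A : Set α) ∧ (↑A : Set α) ⊆ ↑B ∪ AB.ExtSet M ↑B) := by
    intro A
    constructor
    · intro h
      have : b A = ↑B := by rw [← hgcoe A, h]
      obtain ⟨_, h1, h2⟩ := hb A
      rw [this] at h1 h2
      exact ⟨h1, h2⟩
    · rintro ⟨h1, h2⟩
      obtain ⟨hbase, hl, hu⟩ := hb A
      have : b A = ↑B := interval_unique hE hbase hBbase hl hu h1 h2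
      apply Finset.coe_injective
      rw [hgcoe A, this]
  set IntF : Finset α := Finset.univ.filter (· ∈ AB.IntSet M ↑B) with hIntF
  set ExtF : Finset α := Finset.univ.filter (· ∈ AB.ExtSet M ↑B) with hExtF
  have hIntCoe : (↑IntF : Set α) = AB.IntSet M ↑B := by ext x; simp [hIntF]
  have hExtCoe : (↑ExtF : Set α) = AB.ExtSet M ↑B := by ext x; simp [hExtF]
  have hIntB : IntF ⊆ B := by
    intro x hx
    simp only [hIntF, Finset.mem_filter] at hx
    exact hx.2.1
  have hExtB : ∀ x ∈ ExtF, x ∉ B := by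
    intro x hx
    simp only [hExtF, Finset.mem_filter] at hx
    exact fun h => hx.2.1.2 h
  -- rewrite the two powers as sums over powersets
  have hpow1 : ((X 0 + X 1 : MvPolynomial (Fin 4) ℤ)) ^ (AB.IntSet M ↑B).ncard
      = ∑ S ∈ IntF.powerset, (X 0 : MvPolynomial (Fin 4) ℤ) ^ S.card * X 1 ^ (IntF \ S).card := by
    rw [← hIntCoe, Set.ncard_coe_finset, ← Finset.prod_const, Finset.prod_add]
    exact Finset.sum_congr rfl fun S _ => by rw [Finset.prod_const, Finset.prod_const]
  have hpow2 : ((X 2 + X 3 : MvPolynomial (Fin 4) ℤ)) ^ (AB.ExtSet M ↑B).ncard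
      = ∑ T ∈ ExtF.powerset, (X 2 : MvPolynomial (Fin 4) ℤ) ^ (ExtF \ T).card * X 3 ^ T.card := by
    rw [← hExtCoe, Set.ncard_coe_finset, ← Finset.prod_const]
    rw [show (X 2 + X 3 : MvPolynomial (Fin 4) ℤ) = X 3 + X 2 by ring, Finset.prod_add]
    exact Finset.sum_congr rfl fun T _ => by
      rw [Finset.prod_const, Finset.prod_const, mul_comm]
  rw [hpow1, hpow2, Finset.sum_mul_sum, ← Finset.sum_product']
  -- now a bijection between pairs (S, T) and sets A in the fiber
  refine Finset.sum_nbij' (fun p => (B \ IntF) ∪ p.1 ∪ p.2)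
    (fun A => (IntF ∩ A, ExtF ∩ A)) ?_ ?_ ?_ ?_ ?_
  · rintro ⟨S, T⟩ hST
    simp only [Finset.mem_product, Finset.mem_powerset] at hST
    obtain ⟨hS, hT⟩ := hST
    simp only [Finset.mem_filter, Finset.mem_powerset]
    refine ⟨Finset.subset_univ _, (hfiber _).2 ⟨?_, ?_⟩⟩
    · intro x hx
      obtain ⟨hxB, hxI⟩ := hx
      have hxI' : x ∉ IntF := by
        intro h; exact hxI (hIntCoe ▸ (Finset.mem_coe.mpr h))
      simp only [Finset.coe_union, Finset.coe_sdiff]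
      exact Or.inl (Or.inl ⟨hxB, hxI'⟩)
    · intro x hx
      simp only [Finset.coe_union, Finset.coe_sdiff, Set.mem_union] at hx
      rcases hx with (⟨hxB, _⟩ | hxS) | hxT
      · exact Or.inl hxB
      · exact Or.inl (Finset.mem_coe.mpr (hIntB (hS hxS)))
      · exact Or.inr (hExtCoe ▸ Finset.mem_coe.mpr (hT hxT))
  · intro A hA
    simp only [Finset.mem_product, Finset.mem_powerset]
    exact ⟨Finset.inter_subset_left, Finset.inter_subset_left⟩
  · rintro ⟨S, T⟩ hST
    simp only [Finset.mem_product, Finset.mem_powerset] at hST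
    obtain ⟨hS, hT⟩ := hST
    have h1 : IntF ∩ ((B \ IntF) ∪ S ∪ T) = S := by
      ext x
      simp only [Finset.mem_inter, Finset.mem_union, Finset.mem_sdiff]
      constructor
      · rintro ⟨hxI, (⟨_, hxI'⟩ | hxS) | hxT⟩
        · exact absurd hxI hxI'
        · exact hxS
        · exact absurd (hIntB hxI) (hExtB x (hT hxT))
      · intro hxS; exact ⟨hS hxS, Or.inl (Or.inr hxS)⟩
    have h2 : ExtF ∩ ((B \ IntF) ∪ S ∪ T) = T := by
      ext x
      simp only [Finset.mem_inter, Finset.mem_union, Finset.mem_sdiff]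
      constructor
      · rintro ⟨hxE, (⟨hxB, _⟩ | hxS) | hxT⟩
        · exact absurd hxB (hExtB x hxE)
        · exact absurd (hIntB (hS hxS)) (hExtB x hxE)
        · exact hxT
      · intro hxT; exact ⟨hT hxT, Or.inr hxT⟩
    simp only [h1, h2]
  · intro A hA
    simp only [Finset.mem_filter, Finset.mem_powerset] at hA
    obtain ⟨h1, h2⟩ := (hfiber A).1 hA.2
    ext x
    simp only [Finset.mem_union, Finset.mem_sdiff, Finset.mem_inter]
    constructor
    · rintro ((⟨hxB, hxI⟩ | ⟨_, hxA⟩) | ⟨_, hxA⟩)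
      · have : x ∈ (↑A : Set α) := h1 ⟨Finset.mem_coe.mpr hxB, fun h => hxI (by
          simp only [hIntF, Finset.mem_filter]; exact ⟨Finset.mem_univ x, h⟩)⟩
        exact Finset.mem_coe.mp this
      · exact hxA
      · exact hxA
    · intro hxA
      have := h2 (Finset.mem_coe.mpr hxA)
      rcases this with hxB | hxE
      · by_cases hxI : x ∈ IntF
        · exact Or.inl (Or.inr ⟨hxI, hxA⟩)
        · exact Or.inl (Or.inl ⟨Finset.mem_coe.mp hxB, hxI⟩)
      · exact Or.inr ⟨by
          simp only [hExtF, Finset.mem_filter]; exact ⟨Finset.mem_univ x, hxE⟩, hxA⟩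
  · rintro ⟨S, T⟩ hST
    simp only [Finset.mem_product, Finset.mem_powerset] at hST
    obtain ⟨hS, hT⟩ := hST
    -- term equality
    set A : Finset α := (B \ IntF) ∪ S ∪ T with hA
    have hbA : b A = ↑B := by
      have hmem : g A = B := (hfiber A).2 (by
        constructor
        · intro x hx
          obtain ⟨hxB, hxI⟩ := hx
          have hxI' : x ∉ IntF := fun h => hxI (hIntCoe ▸ (Finset.mem_coe.mpr h))
          simp only [hA, Finset.coe_union, Finset.coe_sdiff]
          exact Or.inl (Or.inl ⟨hxB, hxI'⟩)
        · intro x hx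
          simp only [hA, Finset.coe_union, Finset.coe_sdiff, Set.mem_union] at hx
          rcases hx with (⟨hxB, _⟩ | hxS) | hxT
          · exact Or.inl hxB
          · exact Or.inl (Finset.mem_coe.mpr (hIntB (hS hxS)))
          · exact Or.inr (hExtCoe ▸ Finset.mem_coe.mpr (hT hxT)))
      rw [← hgcoe A, hmem]
    have hIA : IntF ∩ A = S := by
      ext x
      simp only [hA, Finset.mem_inter, Finset.mem_union, Finset.mem_sdiff]
      constructor
      · rintro ⟨hxI, (⟨_, hxI'⟩ | hxS) | hxT⟩
        · exact absurd hxI hxI'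
        · exact hxS
        · exact absurd (hIntB hxI) (hExtB x (hT hxT))
      · intro hxS; exact ⟨hS hxS, Or.inl (Or.inr hxS)⟩
    have hEA : ExtF ∩ A = T := by
      ext x
      simp only [hA, Finset.mem_inter, Finset.mem_union, Finset.mem_sdiff]
      constructor
      · rintro ⟨hxE, (⟨hxB, _⟩ | hxS) | hxT⟩
        · exact absurd hxB (hExtB x hxE)
        · exact absurd (hIntB (hS hxS)) (hExtB x hxE)
        · exact hxT
      · intro hxT; exact ⟨hT hxT, Or.inr hxT⟩
    have e1 : (AB.IntSet M (b A) ∩ ↑A).ncard = S.card := by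
      rw [hbA, ← hIntCoe, ← Finset.coe_inter, Set.ncard_coe_finset, hIA]
    have e2 : (AB.IntSet M (b A) \ ↑A).ncard = (IntF \ S).card := by
      rw [hbA, ← hIntCoe, ← Finset.coe_sdiff, Set.ncard_coe_finset,
        ← hIA, Finset.sdiff_inter_self_left]
    have e3 : (AB.ExtSet M (b A) \ ↑A).ncard = (ExtF \ T).card := by
      rw [hbA, ← hExtCoe, ← Finset.coe_sdiff, Set.ncard_coe_finset,
        ← hEA, Finset.sdiff_inter_self_left]
    have e4 : (AB.ExtSet M (b A) ∩ ↑A).ncard = T.card := by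
      rw [hbA, ← hExtCoe, ← Finset.coe_inter, Set.ncard_coe_finset, hEA]
    rw [e1, e2, e3, e4]
    ring
end

section
/- Let M be a matroid on a finite linearly ordered set E. The set of independent sets of M is the disjoint union, over all bases B of M, of the boolean intervals [B \ Int(B), B]; consequently the number of independent sets equals t(M;2,1). -/
attribute [local instance] Classical.propDecidable

namespace AB
/-- The Tutte polynomial of an ordered matroid, evaluated at `(x, y)`, via Crapo's
expression in terms of basis activities: `t(M;x,y) = Σ_B x^|Int(B)| y^|Ext(B)|`. -/
noncomputable def tutteEval {α : Type*} [Fintype α] [LinearOrder α]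
    (M : Matroid α) (x y : ℤ) : ℤ :=
  ∑ B ∈ Finset.univ.powerset.filter (fun B : Finset α => M.IsBase ↑B),
    x ^ (AB.IntSet M ↑B).ncard * y ^ (AB.ExtSet M ↑B).ncard
end AB

section aux
set_option linter.unusedSectionVars false
variable {α : Type*} [LinearOrder α] {M : Matroid α} {B : Set α} {b : α}

lemma not_base_diff (hB : M.IsBase B) (hb : b ∈ B) : ¬ M.IsBase (B \ {b}) := by
  intro h
  have h2 : B \ {b} = B := h.eq_of_subset_isBase hB Set.diff_subset
  have : b ∈ B \ {b} := h2.symm ▸ hb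
  simp at this

lemma intActive_iff (hE : M.E = Set.univ) (hB : M.IsBase B) (hb : b ∈ B) :
    AB.IntActive M B b ↔ ∀ x, x < b → ¬ M.IsBase (insert x (B \ {b})) := by
  constructor
  · rintro ⟨-, C, ⟨hCdep, -⟩, hCsub, hbC, hmin⟩ x hxb hx
    by_cases hxB : x ∈ B
    · have hcol : insert x (B \ {b}) = B \ {b} :=
        Set.insert_eq_self.2 ⟨hxB, by simp [hxb.ne]⟩
      exact not_base_diff hB hb (hcol ▸ hx)
    · have hCE : C ⊆ M✶.E := hCdep.subset_ground
      have hdual : ¬ M✶.Indep C := hCdep.not_indep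
      rw [Matroid.dual_indep_iff_exists'] at hdual
      push_neg at hdual
      have hnd : ¬ Disjoint C (insert x (B \ {b})) := hdual hCE _ hx
      obtain ⟨y, hyC, hyB'⟩ := Set.not_disjoint_iff.1 hnd
      rcases hCsub hyC with ⟨-, hyB⟩ | hy
      · rcases Set.mem_insert_iff.1 hyB' with rfl | hmem
        · exact absurd (hmin _ hyC) (not_le.2 hxb)
        · exact hyB hmem.1
      · rcases Set.mem_insert_iff.1 (Set.mem_singleton_iff.1 hy ▸ hyB') with h1 | h2
        · exact hxB (h1 ▸ hb)
        · exact h2.2 rfl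
  · intro h
    have hbD : M.IsBase (insert b (B \ {b})) := by
      rwa [Set.insert_diff_singleton, Set.insert_eq_self.2 hb]
    refine ⟨hb, {x | M.IsBase (insert x (B \ {b}))}, ⟨⟨?_, ?_⟩, ?_⟩, ?_, hbD, ?_⟩
    · intro hind
      rw [Matroid.dual_indep_iff_exists'] at hind
      obtain ⟨-, B', hB', hdisj⟩ := hind
      have hbB' : b ∉ B' := fun hmem => Set.disjoint_left.1 hdisj hbD hmem
      obtain ⟨y, hy, hyBase⟩ := hB.exchange hB' ⟨hb, hbB'⟩
      exact Set.disjoint_left.1 hdisj hyBase hy.1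
    · rw [Matroid.dual_ground, hE]; exact Set.subset_univ _
    · intro D' hD'
      obtain ⟨d, hdD, hdD'⟩ := Set.exists_of_ssubset hD'
      rw [Matroid.dual_indep_iff_exists']
      refine ⟨by rw [hE]; exact Set.subset_univ _,
        insert d (B \ {b}), hdD, ?_⟩
      rw [Set.disjoint_left]
      intro z hzD' hzB
      have hzD : M.IsBase (insert z (B \ {b})) := hD'.subset hzD'
      rcases Set.mem_insert_iff.1 hzB with rfl | hz
      · exact hdD' hzD'
      · exact not_base_diff hB hb ((Set.insert_eq_self.2 hz) ▸ hzD)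
    · intro x hx
      by_cases hxb : x = b
      · exact Set.mem_union_right _ hxb
      by_cases hxB : x ∈ B
      · have hcol : insert x (B \ {b}) = B \ {b} :=
          Set.insert_eq_self.2 (Set.mem_diff_singleton.2 ⟨hxB, hxb⟩)
        exact absurd (hcol ▸ hx) (not_base_diff hB hb)
      · exact Set.mem_union_left _ ⟨by rw [hE]; trivial, hxB⟩
    · intro x hx
      by_contra hlt
      exact h x (lt_of_not_ge hlt) hx

end aux

section weights
set_option linter.unusedSectionVars false
variable {α : Type*} [Fintype α] [LinearOrder α]

/-- A weight giving each element a power of two, strictly increasing. -/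
noncomputable def wgt (a : α) : ℕ := 2 ^ (Finset.univ.filter (fun x => x < a)).card

lemma wgt_lt {a b : α} (h : a < b) : wgt a < wgt b := by
  apply Nat.pow_lt_pow_right one_lt_two
  apply Finset.card_lt_card
  constructor
  · intro x hx
    simp only [Finset.mem_filter, Finset.mem_univ, true_and] at *
    exact hx.trans h
  · intro hsup
    have := hsup (by simp [h] : a ∈ Finset.univ.filter (fun x => x < b))
    simp at this

/-- Total weight of a set. -/
noncomputable def nval (S : Set α) : ℕ := ∑ x ∈ Finset.univ.filter (· ∈ S), wgt x

lemma nval_insert {S : Set α} {x : α} (hx : x ∉ S) : nval (insert x S) = wgt x + nval S := by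
  unfold nval
  rw [← Finset.sum_insert (show x ∉ Finset.univ.filter (· ∈ S) from by simp [hx])]
  apply Finset.sum_congr _ fun _ _ => rfl
  ext y
  simp [Set.mem_insert_iff]

lemma nval_exchange {B : Set α} {b x : α} (hb : b ∈ B) (hx : x ∉ B) (hlt : x < b) :
    nval (insert x (B \ {b})) < nval B := by
  have hxd : x ∉ B \ {b} := fun h => hx h.1
  have hbd : b ∉ B \ {b} := fun h => h.2 rfl
  have hBeq : B = insert b (B \ {b}) := by
    rw [Set.insert_diff_singleton, Set.insert_eq_self.2 hb]
  rw [nval_insert hxd]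
  conv_rhs => rw [hBeq, nval_insert hbd]
  exact Nat.add_lt_add_right (wgt_lt hlt) _

lemma part1 {M : Matroid α} (hE : M.E = Set.univ) (A : Set α) :
    M.Indep A ↔ ∃ B : Set α, M.IsBase B ∧ B \ AB.IntSet M B ⊆ A ∧ A ⊆ B := by
  constructor
  · intro hA
    obtain ⟨B0, hB0, hAB0⟩ := hA.exists_isBase_superset
    obtain ⟨B, hBT, hmin⟩ := Set.exists_min_image {B | M.IsBase B ∧ A ⊆ B} nval
      (Set.toFinite _) ⟨B0, hB0, hAB0⟩
    obtain ⟨hB, hAB⟩ := hBT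
    refine ⟨B, hB, ?_, hAB⟩
    rintro b ⟨hbB, hbI⟩
    by_contra hbA
    apply hbI
    show AB.IntActive M B b
    rw [intActive_iff hE hB hbB]
    intro x hxb hx
    by_cases hxB : x ∈ B
    · have hcol : insert x (B \ {b}) = B \ {b} :=
        Set.insert_eq_self.2 (Set.mem_diff_singleton.2 ⟨hxB, hxb.ne⟩)
      exact not_base_diff hB hbB (hcol ▸ hx)
    · have hmem : insert x (B \ {b}) ∈ {B | M.IsBase B ∧ A ⊆ B} := by
        refine ⟨hx, fun a ha => Set.mem_insert_iff.2 (Or.inr ⟨hAB ha, ?_⟩)⟩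
        intro h
        exact hbA ((Set.mem_singleton_iff.1 h) ▸ ha)
      exact absurd (hmin _ hmem) (not_le.2 (nval_exchange hbB hxB hxb))
  · rintro ⟨B, hB, -, hAB⟩
    exact hB.indep.subset hAB

lemma part2_aux {M : Matroid α} (hE : M.E = Set.univ) {B₁ B₂ A : Set α} {b : α}
    (hB₁ : M.IsBase B₁) (hB₂ : M.IsBase B₂)
    (h1 : B₁ \ AB.IntSet M B₁ ⊆ A) (h2 : A ⊆ B₂)
    (hb : b ∈ B₁ \ B₂)
    (hmax : ∀ x ∈ (B₁ \ B₂) ∪ (B₂ \ B₁), x ≤ b) : False := by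
  have hbA : b ∉ A := fun h => hb.2 (h2 h)
  have hact : AB.IntActive M B₁ b := by
    by_contra hno
    exact hbA (h1 ⟨hb.1, hno⟩)
  rw [intActive_iff hE hB₁ hb.1] at hact
  obtain ⟨y, hy, hyBase⟩ := hB₁.exchange hB₂ hb
  have hyb : y < b :=
    lt_of_le_of_ne (hmax y (Set.mem_union_right _ hy)) (fun h => hy.2 (h ▸ hb.1))
  exact hact y hyb hyBase

lemma part2 {M : Matroid α} (hE : M.E = Set.univ) (B₁ B₂ : Set α)
    (hB₁ : M.IsBase B₁) (hB₂ : M.IsBase B₂) (hne : B₁ ≠ B₂) (A : Set α) :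
    ¬ ((B₁ \ AB.IntSet M B₁ ⊆ A ∧ A ⊆ B₁) ∧
        (B₂ \ AB.IntSet M B₂ ⊆ A ∧ A ⊆ B₂)) := by
  rintro ⟨⟨h11, h12⟩, ⟨h21, h22⟩⟩
  have hSne : ((B₁ \ B₂) ∪ (B₂ \ B₁)).Nonempty := by
    rw [Set.nonempty_iff_ne_empty]
    intro h
    apply hne
    apply Set.Subset.antisymm
    · intro x hx
      by_contra hx2
      exact absurd (h ▸ (Set.mem_union_left _ ⟨hx, hx2⟩)) (Set.notMem_empty x)
    · intro x hx
      by_contra hx2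
      exact absurd (h ▸ (Set.mem_union_right _ ⟨hx, hx2⟩)) (Set.notMem_empty x)
  obtain ⟨b, hbS, hmax⟩ := Set.exists_max_image _ id (Set.toFinite _) hSne
  rcases hbS with hb | hb
  · exact part2_aux hE hB₁ hB₂ h11 h22 hb hmax
  · refine part2_aux hE hB₂ hB₁ h21 h12 hb ?_
    intro x hx
    rcases hx with hx | hx
    · exact hmax x (Set.mem_union_right _ hx)
    · exact hmax x (Set.mem_union_left _ hx)

end weights

/-- The independent sets of `M` are the disjoint union, over all bases
`B`, of the boolean intervals `[B \ Int(B), B]`; consequently the number of independent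
sets equals `t(M;2,1)`. -/
theorem stmt_8 {α : Type*} [Fintype α] [LinearOrder α] (M : Matroid α)
    (hE : M.E = Set.univ) :
    (∀ A : Set α, M.Indep A ↔ ∃ B : Set α, M.IsBase B ∧ B \ AB.IntSet M B ⊆ A ∧ A ⊆ B) ∧
    (∀ B₁ B₂ : Set α, M.IsBase B₁ → M.IsBase B₂ → B₁ ≠ B₂ →
      ∀ A : Set α, ¬ ((B₁ \ AB.IntSet M B₁ ⊆ A ∧ A ⊆ B₁) ∧
        (B₂ \ AB.IntSet M B₂ ⊆ A ∧ A ⊆ B₂))) ∧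
    (((Finset.univ.powerset.filter (fun A : Finset α => M.Indep ↑A)).card : ℤ)
      = AB.tutteEval M 2 1) := by
  refine ⟨part1 hE, fun B₁ B₂ h1 h2 hne A => part2 hE B₁ B₂ h1 h2 hne A, ?_⟩
  set intF : Finset α → Finset α :=
    fun B => B.filter (fun b => b ∈ AB.IntSet M ↑B) with hintF
  have hIntEq : ∀ B : Finset α, (AB.IntSet M ↑B : Set α) = ↑(intF B) := by
    intro B
    ext x
    simp only [hintF, Finset.coe_filter, Set.mem_setOf_eq, Finset.mem_coe]
    exact ⟨fun h => ⟨h.1, h⟩, fun h => h.2⟩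
  have hdiffEq : ∀ B : Finset α, (↑B : Set α) \ AB.IntSet M ↑B = ↑(B \ intF B) := by
    intro B
    rw [Finset.coe_sdiff, hIntEq]
  have hmemIcc : ∀ B A : Finset α, A ∈ Finset.Icc (B \ intF B) B ↔
      ((↑B : Set α) \ AB.IntSet M ↑B ⊆ ↑A ∧ (↑A : Set α) ⊆ ↑B) := by
    intro B A
    rw [Finset.mem_Icc, hdiffEq]
    constructor
    · rintro ⟨hl, hr⟩
      exact ⟨Finset.coe_subset.2 hl, Finset.coe_subset.2 hr⟩
    · rintro ⟨hl, hr⟩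
      exact ⟨Finset.coe_subset.1 hl, Finset.coe_subset.1 hr⟩
  have hun : Finset.univ.powerset.filter (fun A : Finset α => M.Indep ↑A)
      = (Finset.univ.powerset.filter (fun B : Finset α => M.IsBase ↑B)).biUnion
          (fun B => Finset.Icc (B \ intF B) B) := by
    ext A
    simp only [Finset.mem_filter, Finset.mem_powerset, Finset.subset_univ, true_and,
      Finset.mem_biUnion]
    rw [part1 hE (↑A : Set α)]
    constructor
    · rintro ⟨B, hB, hsub1, hsub2⟩
      refine ⟨(Set.toFinite B).toFinset, ?_, ?_⟩
      · rwa [Set.Finite.coe_toFinset]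
      · rw [hmemIcc, Set.Finite.coe_toFinset]
        exact ⟨hsub1, hsub2⟩
    · rintro ⟨B, hB, hA⟩
      rw [hmemIcc] at hA
      exact ⟨↑B, hB, hA.1, hA.2⟩
  have hdisj : ∀ B₁ ∈ Finset.univ.powerset.filter (fun B : Finset α => M.IsBase ↑B),
      ∀ B₂ ∈ Finset.univ.powerset.filter (fun B : Finset α => M.IsBase ↑B),
      B₁ ≠ B₂ → Disjoint (Finset.Icc (B₁ \ intF B₁) B₁) (Finset.Icc (B₂ \ intF B₂) B₂) := by
    intro B₁ h₁ B₂ h₂ hne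
    rw [Finset.disjoint_left]
    intro A hA1 hA2
    exact part2 hE ↑B₁ ↑B₂ (Finset.mem_filter.1 h₁).2 (Finset.mem_filter.1 h₂).2
      (fun h => hne (Finset.coe_injective h)) ↑A
      ⟨(hmemIcc _ _).1 hA1, (hmemIcc _ _).1 hA2⟩
  have hcard : ∀ B ∈ Finset.univ.powerset.filter (fun B : Finset α => M.IsBase ↑B),
      (Finset.Icc (B \ intF B) B).card = 2 ^ (AB.IntSet M (↑B : Set α)).ncard := by
    intro B _
    have hsub : intF B ⊆ B := Finset.filter_subset _ _
    rw [Finset.card_Icc_finset Finset.sdiff_subset, Finset.card_sdiff_of_subset hsub,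
      Nat.sub_sub_self (Finset.card_le_card hsub), hIntEq, Set.ncard_coe_finset]
  rw [hun, Finset.card_biUnion hdisj, Finset.sum_congr rfl hcard]
  simp only [AB.tutteEval, one_pow, mul_one]
  push_cast
  rfl
end

section
/- Let M be a matroid on a finite linearly ordered set E with |E| > 1. Then the number of bases of M with internal activity 1 and external activity 0 equals the number of bases with internal activity 0 and external activity 1. Moreover, an explicit bijection is given by B ↦ (B \ {p}) ∪ {p'}, where p = min(E) and p' = min(E \ {p}): B is a uniactive internal basis if and only if (B \ {p}) ∪ {p'} is a uniactive external basis. -/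
namespace AB
/-- A uniactive internal basis: internal activity 1 and external activity 0. -/
def UniactiveInternal {α : Type*} [LinearOrder α] (M : Matroid α) (B : Set α) : Prop :=
  M.IsBase B ∧ (IntSet M B).ncard = 1 ∧ (ExtSet M B).ncard = 0

/-- A uniactive external basis: internal activity 0 and external activity 1. -/
def UniactiveExternal {α : Type*} [LinearOrder α] (M : Matroid α) (B : Set α) : Prop :=
  M.IsBase B ∧ (IntSet M B).ncard = 0 ∧ (ExtSet M B).ncard = 1
end AB


namespace AB
open Set

variable {α : Type*}

lemma exists_circuit_subset_aux (M : Matroid α) (hfin : M.E.Finite) :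
    ∀ n : ℕ, ∀ X : Set α, X.ncard ≤ n → M.Dep X → ∃ C, Circuit M C ∧ C ⊆ X := by
  intro n
  induction n with
  | zero =>
    intro X hX hdep
    have hXfin : X.Finite := hfin.subset hdep.subset_ground
    rw [Nat.le_zero, Set.ncard_eq_zero hXfin] at hX
    subst hX
    exact absurd M.empty_indep hdep.not_indep
  | succ n ih =>
    intro X hX hdep
    have hXfin : X.Finite := hfin.subset hdep.subset_ground
    by_cases h : ∀ D, D ⊂ X → M.Indep D
    · exact ⟨X, ⟨hdep, h⟩, Subset.rfl⟩
    · push_neg at h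
      obtain ⟨D, hDX, hDi⟩ := h
      have hDdep : M.Dep D := ⟨hDi, hDX.subset.trans hdep.subset_ground⟩
      have hlt : D.ncard < X.ncard := Set.ncard_lt_ncard hDX hXfin
      obtain ⟨C, hC, hCD⟩ := ih D (by omega) hDdep
      exact ⟨C, hC, hCD.trans hDX.subset⟩

lemma exists_circuit_subset {M : Matroid α} (hfin : M.E.Finite) {X : Set α} (hX : M.Dep X) :
    ∃ C, Circuit M C ∧ C ⊆ X :=
  exists_circuit_subset_aux M hfin X.ncard X le_rfl hX

lemma fundCircuit {M : Matroid α} (hfin : M.E.Finite) {B : Set α} {e : α}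
    (hB : M.IsBase B) (he : e ∈ M.E \ B) :
    ∃ C, Circuit M C ∧ C ⊆ B ∪ {e} ∧ e ∈ C := by
  obtain ⟨C, hC, hCs⟩ := exists_circuit_subset hfin (hB.insert_dep he)
  have heC : e ∈ C := by
    by_contra h
    have hCB : C ⊆ B := fun x hx =>
      (mem_insert_iff.1 (hCs hx)).resolve_left (fun hxe => h (hxe ▸ hx))
    exact hC.1.not_indep (hB.indep.subset hCB)
  exact ⟨C, hC, by rwa [union_singleton], heC⟩

lemma fundCocircuit {M : Matroid α} (hfin : M.E.Finite) {B : Set α} {b : α}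
    (hB : M.IsBase B) (hb : b ∈ B) :
    ∃ C, Cocircuit M C ∧ C ⊆ (M.E \ B) ∪ {b} ∧ b ∈ C := by
  have hBd : M✶.IsBase (M.E \ B) := hB.compl_isBase_dual
  have hbd : b ∈ M✶.E \ (M.E \ B) := ⟨hB.subset_ground hb, fun h => h.2 hb⟩
  exact fundCircuit (M := M✶) hfin hBd hbd

lemma cocircuit_meets_base {M : Matroid α} {B C : Set α} (hB : M.IsBase B)
    (hC : Cocircuit M C) : ∃ x, x ∈ C ∧ x ∈ B := by
  by_contra h
  push_neg at h
  have hCs : C ⊆ M.E \ B := fun x hx => ⟨hC.1.subset_ground hx, h x hx⟩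
  exact hC.1.not_indep (hB.compl_isBase_dual.indep.subset hCs)

lemma circuit_not_subset_base {M : Matroid α} {B C : Set α} (hB : M.IsBase B)
    (hC : Circuit M C) (hs : C ⊆ B) : False :=
  hC.1.not_indep (hB.indep.subset hs)

section Main

variable [LinearOrder α] {M : Matroid α} {p p' : α} {B B' : Set α}

-- min of ground set is externally active when outside a base
lemma least_extActive (hfin : M.E.Finite) (hp : IsLeast M.E p) (hB : M.IsBase B)
    (hpB : p ∉ B) : p ∈ ExtSet M B := by
  obtain ⟨C, hC, hCs, hpC⟩ := fundCircuit hfin hB ⟨hp.1, hpB⟩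
  exact ⟨⟨hp.1, hpB⟩, C, hC, hCs, hpC, fun x hx => hp.2 (hC.1.subset_ground hx)⟩

-- min of ground set is internally active when inside a base
lemma least_intActive (hfin : M.E.Finite) (hp : IsLeast M.E p) (hB : M.IsBase B)
    (hpB : p ∈ B) : p ∈ IntSet M B := by
  obtain ⟨C, hC, hCs, hpC⟩ := fundCocircuit hfin hB hpB
  exact ⟨hpB, C, hC, hCs, hpC, fun x hx => hp.2 (hC.1.subset_ground hx)⟩

lemma fwd [M.Finite] (hp : IsLeast M.E p) (hp' : IsLeast (M.E \ {p}) p')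
    (hB : UniactiveInternal M B) :
    UniactiveExternal M ((B \ {p}) ∪ {p'}) ∧ p ∈ B ∧ p' ∉ B := by
  obtain ⟨hBb, hInt, hExt⟩ := hB
  have hfin := M.ground_finite
  have hpE : p ∈ M.E := hp.1
  have hp'E : p' ∈ M.E := hp'.1.1
  have hpp' : p < p' := lt_of_le_of_ne (hp.2 hp'.1.1) (Ne.symm hp'.1.2)
  have hmin' : ∀ x ∈ M.E, x ≠ p → p' ≤ x := fun x hx hxp => hp'.2 ⟨hx, hxp⟩
  have hExtE : ExtSet M B = ∅ :=
    (Set.ncard_eq_zero (hfin.subset fun x hx => hx.1.1)).1 hExt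
  have hpB : p ∈ B := by
    by_contra hpB
    have := least_extActive hfin hp hBb hpB
    rw [hExtE] at this; exact this
  have hIntE : IntSet M B = {p} := by
    obtain ⟨a, ha⟩ := Set.ncard_eq_one.1 hInt
    have hpI : p ∈ IntSet M B := least_intActive hfin hp hBb hpB
    rw [ha] at hpI ⊢
    rw [mem_singleton_iff] at hpI
    rw [hpI]
  have hp'B : p' ∉ B := by
    intro hp'B
    obtain ⟨C, hC, hCs, hp'C⟩ := fundCocircuit hfin hBb hp'B
    have hmin : ∀ x ∈ C, p' ≤ x := by
      intro x hx
      rcases hCs hx with h | h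
      · exact hmin' x h.1 (fun hxp => h.2 (hxp ▸ hpB))
      · exact le_of_eq (mem_singleton_iff.1 h).symm
    have : p' ∈ IntSet M B := ⟨hp'B, C, hC, hCs, hp'C, hmin⟩
    rw [hIntE, mem_singleton_iff] at this
    exact hpp'.ne' this
  set B' := (B \ {p}) ∪ {p'} with hB'def
  have hB'E : B' ⊆ M.E :=
    union_subset (diff_subset.trans hBb.subset_ground) (singleton_subset_iff.2 hp'E)
  have hpB' : p ∉ B' := by
    rintro (⟨-, h⟩ | h)
    · exact h rfl
    · exact hpp'.ne (mem_singleton_iff.1 h)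
  have hp'B' : p' ∈ B' := Or.inr rfl
  -- every circuit in B ∪ {p'} through p' contains p
  have hkey : ∀ C, Circuit M C → C ⊆ B ∪ {p'} → p' ∈ C → p ∈ C := by
    intro C hC hCs hp'C
    by_contra hpC
    have hmin : ∀ x ∈ C, p' ≤ x := by
      intro x hx
      rcases hCs hx with h | h
      · exact hmin' x (hBb.subset_ground h) (fun hxp => hpC (hxp ▸ hx))
      · exact le_of_eq (mem_singleton_iff.1 h).symm
    have : p' ∈ ExtSet M B := ⟨⟨hp'E, hp'B⟩, C, hC, hCs, hp'C, hmin⟩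
    rw [hExtE] at this; exact this
  have hB'i : M.Indep B' := by
    by_contra hdep
    obtain ⟨C, hC, hCs⟩ := exists_circuit_subset hfin ⟨hdep, hB'E⟩
    have hp'C : p' ∈ C := by
      by_contra h
      refine circuit_not_subset_base hBb hC (fun x hx => ?_)
      rcases hCs hx with hh | hh
      · exact hh.1
      · exact absurd (mem_singleton_iff.1 hh ▸ hx) h
    have hpC : p ∈ C :=
      hkey C hC (hCs.trans (union_subset_union diff_subset Subset.rfl)) hp'C
    exact hpB' (hCs hpC)
  have hB'b : M.IsBase B' := by
    obtain ⟨B'', hB'', hsub⟩ := hB'i.exists_isBase_superset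
    have hcard : B''.encard ≤ B'.encard := by
      have h1 : B''.encard = B.encard := hB''.encard_eq_encard_of_isBase hBb
      have h2 : B'.encard = B.encard := by
        have : B' = insert p' (B \ {p}) := by rw [hB'def, union_singleton]
        rw [this, Set.encard_exchange hp'B hpB]
      rw [h1, h2]
    have : B' = B'' :=
      (hfin.subset hB''.subset_ground).eq_of_subset_of_encard_le' hsub hcard
    rwa [this]
  -- ExtSet of B' is {p}
  have hExt' : ExtSet M B' = {p} := by
    apply Set.eq_singleton_iff_unique_mem.2
    refine ⟨least_extActive hfin hp hB'b hpB', ?_⟩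
    intro x hx
    by_contra hxp
    obtain ⟨⟨hxE, hxB'⟩, C, hC, hCs, hxC, hxmin⟩ := hx
    have hxp' : x ≠ p' := fun h => hxB' (h ▸ hp'B')
    have hp'x : p' < x := lt_of_le_of_ne (hmin' x hxE hxp) (Ne.symm hxp')
    have hpC : p ∉ C := fun h => absurd (hxmin p h) (not_le.2 (hpp'.trans hp'x))
    have hp'C : p' ∉ C := fun h => absurd (hxmin p' h) (not_le.2 hp'x)
    have hCsB : C ⊆ B ∪ {x} := by
      intro y hy
      rcases hCs hy with hh | hh
      · rcases hh with hh | hh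
        · exact Or.inl hh.1
        · exact absurd (mem_singleton_iff.1 hh ▸ hy) hp'C
      · exact Or.inr hh
    have hxB : x ∉ B := fun h => hxB' (Or.inl ⟨h, hxp⟩)
    have : x ∈ ExtSet M B := ⟨⟨hxE, hxB⟩, C, hC, hCsB, hxC, hxmin⟩
    rw [hExtE] at this; exact this
  -- IntSet of B' is empty
  have hInt' : IntSet M B' = ∅ := by
    rw [Set.eq_empty_iff_forall_notMem]
    intro x hx
    obtain ⟨hxB', C, hC, hCs, hxC, hxmin⟩ := hx
    by_cases hxp' : x = p'
    · subst hxp'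
      obtain ⟨y, hyC, hyB⟩ := cocircuit_meets_base hBb hC
      have hyp : y = p := by
        rcases hCs hyC with hh | hh
        · by_contra hyp
          exact hh.2 (Or.inl ⟨hyB, hyp⟩)
        · exact absurd (mem_singleton_iff.1 hh ▸ hyB) hp'B
      exact absurd (hxmin y hyC) (not_le.2 (hyp ▸ hpp'))
    · have hxB : x ∈ B \ {p} := by
        rcases hxB' with hh | hh
        · exact hh
        · exact absurd (mem_singleton_iff.1 hh) hxp'
      have hp'x : p' < x :=
        lt_of_le_of_ne (hmin' x (hBb.subset_ground hxB.1) hxB.2) (Ne.symm hxp')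
      have hpC : p ∉ C := fun h => absurd (hxmin p h) (not_le.2 (hpp'.trans hp'x))
      have hp'C : p' ∉ C := fun h => absurd (hxmin p' h) (not_le.2 hp'x)
      have hCsB : C ⊆ (M.E \ B) ∪ {x} := by
        intro y hy
        rcases hCs hy with hh | hh
        · refine Or.inl ⟨hh.1, fun hyB => hh.2 ?_⟩
          exact Or.inl ⟨hyB, fun h => hpC (h ▸ hy)⟩
        · exact Or.inr hh
      have : x ∈ IntSet M B := ⟨hxB.1, C, hC, hCsB, hxC, hxmin⟩
      rw [hIntE, mem_singleton_iff] at this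
      exact (hpp'.trans hp'x).ne' this
  exact ⟨⟨hB'b, by rw [hInt']; simp, by rw [hExt']; simp⟩, hpB, hp'B⟩


lemma bwd [M.Finite] (hp : IsLeast M.E p) (hp' : IsLeast (M.E \ {p}) p')
    (hB' : UniactiveExternal M B') :
    UniactiveInternal M ((B' \ {p'}) ∪ {p}) ∧ p ∉ B' ∧ p' ∈ B' := by
  obtain ⟨hB'b, hInt, hExt⟩ := hB'
  have hfin := M.ground_finite
  have hpE : p ∈ M.E := hp.1
  have hp'E : p' ∈ M.E := hp'.1.1
  have hpp' : p < p' := lt_of_le_of_ne (hp.2 hp'.1.1) (Ne.symm hp'.1.2)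
  have hmin' : ∀ x ∈ M.E, x ≠ p → p' ≤ x := fun x hx hxp => hp'.2 ⟨hx, hxp⟩
  have hIntE : IntSet M B' = ∅ :=
    (Set.ncard_eq_zero (hfin.subset fun x hx => hB'b.subset_ground hx.1)).1 hInt
  have hpB' : p ∉ B' := by
    intro hpB'
    have := least_intActive hfin hp hB'b hpB'
    rw [hIntE] at this; exact this
  have hExtE : ExtSet M B' = {p} := by
    obtain ⟨a, ha⟩ := Set.ncard_eq_one.1 hExt
    have hpI : p ∈ ExtSet M B' := least_extActive hfin hp hB'b hpB'
    rw [ha] at hpI ⊢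
    rw [mem_singleton_iff] at hpI
    rw [hpI]
  have hp'B' : p' ∈ B' := by
    by_contra hp'B'
    obtain ⟨C, hC, hCs, hp'C⟩ := fundCircuit hfin hB'b ⟨hp'E, hp'B'⟩
    have hmin : ∀ x ∈ C, p' ≤ x := by
      intro x hx
      rcases hCs hx with h | h
      · exact hmin' x (hB'b.subset_ground h) (fun hxp => hpB' (hxp ▸ h))
      · exact le_of_eq (mem_singleton_iff.1 h).symm
    have : p' ∈ ExtSet M B' := ⟨⟨hp'E, hp'B'⟩, C, hC, hCs, hp'C, hmin⟩
    rw [hExtE, mem_singleton_iff] at this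
    exact hpp'.ne' this
  set B := (B' \ {p'}) ∪ {p} with hBdef
  have hBE : B ⊆ M.E :=
    union_subset (diff_subset.trans hB'b.subset_ground) (singleton_subset_iff.2 hpE)
  have hpB : p ∈ B := Or.inr rfl
  have hp'B : p' ∉ B := by
    rintro (⟨-, h⟩ | h)
    · exact h rfl
    · exact hpp'.ne' (mem_singleton_iff.1 h)
  -- every cocircuit in (E \ B') ∪ {p'} through p' contains p
  have hkey : ∀ C, Cocircuit M C → C ⊆ (M.E \ B') ∪ {p'} → p' ∈ C → p ∈ C := by
    intro C hC hCs hp'C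
    by_contra hpC
    have hmin : ∀ x ∈ C, p' ≤ x := by
      intro x hx
      rcases hCs hx with h | h
      · exact hmin' x h.1 (fun hxp => hpC (hxp ▸ hx))
      · exact le_of_eq (mem_singleton_iff.1 h).symm
    have : p' ∈ IntSet M B' := ⟨hp'B', C, hC, hCs, hp'C, hmin⟩
    rw [hIntE] at this; exact this
  have hcompl : M.E \ B = ((M.E \ B') \ {p}) ∪ {p'} := by
    apply Set.Subset.antisymm
    · rintro x ⟨hxE, hxB⟩
      by_cases hxp' : x = p'
      · exact mem_union_right _ (by simp [hxp'])
      · refine mem_union_left _ ⟨⟨hxE, fun hxB' => hxB (mem_union_left _ ⟨hxB', hxp'⟩)⟩,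
          fun h => hxB (mem_union_right _ h)⟩
    · rintro x (⟨⟨hxE, hxB'⟩, hxp⟩ | hx)
      · refine ⟨hxE, fun h => ?_⟩
        rcases h with h | h
        · exact hxB' h.1
        · exact hxp h
      · rw [mem_singleton_iff] at hx
        subst hx
        refine ⟨hp'E, fun h => ?_⟩
        rcases h with h | h
        · exact h.2 rfl
        · exact hpp'.ne' h
  have hdualindep : M✶.Indep (M.E \ B) := by
    by_contra hdep
    obtain ⟨C, hC, hCs⟩ :=
      exists_circuit_subset (M := M✶) hfin ⟨hdep, diff_subset⟩
    have hp'C : p' ∈ C := by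
      by_contra h
      refine circuit_not_subset_base hB'b.compl_isBase_dual hC (fun y hy => ?_)
      rcases (hcompl ▸ hCs) hy with hh | hh
      · exact hh.1
      · exact absurd (mem_singleton_iff.1 hh ▸ hy) h
    have hpC : p ∈ C :=
      hkey C hC ((hcompl ▸ hCs).trans (union_subset_union diff_subset Subset.rfl)) hp'C
    exact (hCs hpC).2 hpB
  have hbase : M.IsBase B := by
    obtain ⟨D, hD, hsub⟩ := hdualindep.exists_isBase_superset
    have hcard : D.encard ≤ (M.E \ B).encard := by
      have h1 : D.encard = (M.E \ B').encard :=
        hD.encard_eq_encard_of_isBase hB'b.compl_isBase_dual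
      have h2 : (M.E \ B).encard = (M.E \ B').encard := by
        rw [hcompl, union_singleton,
          Set.encard_exchange (show p' ∉ M.E \ B' from fun h => h.2 hp'B')
            (show p ∈ M.E \ B' from ⟨hpE, hpB'⟩)]
      rw [h1, h2]
    have hDfin : D.Finite := hfin.subset hD.subset_ground
    have heq : M.E \ B = D := hDfin.eq_of_subset_of_encard_le' hsub hcard
    have := heq ▸ hD
    rwa [Matroid.dual_isBase_iff diff_subset, diff_diff_cancel_left hBE] at this
  have hIntB : IntSet M B = {p} := by
    apply Set.eq_singleton_iff_unique_mem.2
    refine ⟨least_intActive hfin hp hbase hpB, ?_⟩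
    intro x hx
    by_contra hxp
    obtain ⟨hxB, C, hC, hCs, hxC, hxmin⟩ := hx
    have hxB'd : x ∈ B' \ {p'} := by
      rcases hxB with hh | hh
      · exact hh
      · exact absurd (mem_singleton_iff.1 hh) hxp
    have hp'x : p' < x :=
      lt_of_le_of_ne (hmin' x (hB'b.subset_ground hxB'd.1) hxp) (fun h => hxB'd.2 h.symm)
    have hpC : p ∉ C := fun h => absurd (hxmin p h) (not_le.2 (hpp'.trans hp'x))
    have hp'C : p' ∉ C := fun h => absurd (hxmin p' h) (not_le.2 hp'x)
    have hCsB : C ⊆ (M.E \ B') ∪ {x} := by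
      intro y hy
      rcases hCs hy with hh | hh
      · rcases (hcompl ▸ hh : y ∈ ((M.E \ B') \ {p}) ∪ {p'}) with h2 | h2
        · exact Or.inl h2.1
        · exact absurd (mem_singleton_iff.1 h2 ▸ hy) hp'C
      · exact Or.inr hh
    have : x ∈ IntSet M B' := ⟨hxB'd.1, C, hC, hCsB, hxC, hxmin⟩
    rw [hIntE] at this; exact this
  have hExtB : ExtSet M B = ∅ := by
    rw [Set.eq_empty_iff_forall_notMem]
    intro x hx
    obtain ⟨⟨hxE, hxB⟩, C, hC, hCs, hxC, hxmin⟩ := hx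
    have hxp : x ≠ p := fun h => hxB (h ▸ hpB)
    by_cases hxp' : x = p'
    · subst hxp'
      by_cases hpC : p ∈ C
      · exact absurd (hxmin p hpC) (not_le.2 hpp')
      · refine circuit_not_subset_base hB'b hC (fun y hy => ?_)
        rcases hCs hy with hh | hh
        · rcases hh with h2 | h2
          · exact h2.1
          · exact absurd (mem_singleton_iff.1 h2 ▸ hy) hpC
        · exact mem_singleton_iff.1 hh ▸ hp'B'
    · have hp'x : p' < x := lt_of_le_of_ne (hmin' x hxE hxp) (Ne.symm hxp')
      have hpC : p ∉ C := fun h => absurd (hxmin p h) (not_le.2 (hpp'.trans hp'x))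
      have hp'C : p' ∉ C := fun h => absurd (hxmin p' h) (not_le.2 hp'x)
      have hxB' : x ∉ B' := fun h => hxB (Or.inl ⟨h, hxp'⟩)
      have hCsB : C ⊆ B' ∪ {x} := by
        intro y hy
        rcases hCs hy with hh | hh
        · rcases hh with h2 | h2
          · exact Or.inl h2.1
          · exact absurd (mem_singleton_iff.1 h2 ▸ hy) hpC
        · exact Or.inr hh
      have : x ∈ ExtSet M B' := ⟨⟨hxE, hxB'⟩, C, hC, hCsB, hxC, hxmin⟩
      rw [hExtE, mem_singleton_iff] at this
      exact hxp this
  exact ⟨⟨hbase, by rw [hIntB]; simp, by rw [hExtB]; simp⟩, hpB', hp'B'⟩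

lemma swap_swap {B : Set α} {a b : α} (ha : a ∈ B) (hb : b ∉ B) :
    ((B \ {a}) ∪ {b}) \ {b} ∪ {a} = B := by
  ext x
  simp only [mem_union, mem_diff, mem_singleton_iff]
  constructor
  · rintro (⟨(⟨hx, -⟩ | hx), hxb⟩ | rfl)
    · exact hx
    · exact absurd hx hxb
    · exact ha
  · intro hx
    by_cases hxa : x = a
    · exact Or.inr hxa
    · exact Or.inl ⟨Or.inl ⟨hx, hxa⟩, fun h => hb (h ▸ hx)⟩

end Main
end AB


/-- For `|E| > 1`, the number of `(1,0)`-active bases equals the number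
of `(0,1)`-active bases; an explicit bijection is `B ↦ (B \ {p}) ∪ {p'}`, where
`p = min E` and `p' = min (E \ {p})`. -/
theorem stmt_10 {α : Type*} [LinearOrder α] (M : Matroid α) [M.Finite]
    (hcard : 1 < M.E.ncard)
    (p : α) (hp : IsLeast M.E p) (p' : α) (hp' : IsLeast (M.E \ {p}) p') :
    {B : Set α | AB.UniactiveInternal M B}.ncard
        = {B : Set α | AB.UniactiveExternal M B}.ncard ∧
      Set.BijOn (fun B : Set α => (B \ {p}) ∪ {p'})
        {B : Set α | AB.UniactiveInternal M B}
        {B : Set α | AB.UniactiveExternal M B} := by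

  have hbij : Set.BijOn (fun B : Set α => (B \ {p}) ∪ {p'})
      {B : Set α | AB.UniactiveInternal M B}
      {B : Set α | AB.UniactiveExternal M B} := by
    refine ⟨fun B hB => (AB.fwd hp hp' hB).1, ?_, ?_⟩
    · intro B1 h1 B2 h2 heq
      obtain ⟨-, hp1, hp1'⟩ := AB.fwd hp hp' h1
      obtain ⟨-, hp2, hp2'⟩ := AB.fwd hp hp' h2
      calc B1 = ((B1 \ {p}) ∪ {p'}) \ {p'} ∪ {p} := (AB.swap_swap hp1 hp1').symm
        _ = ((B2 \ {p}) ∪ {p'}) \ {p'} ∪ {p} := by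
              rw [show (B1 \ {p}) ∪ {p'} = (B2 \ {p}) ∪ {p'} from heq]
        _ = B2 := AB.swap_swap hp2 hp2'
    · intro B' hB'
      obtain ⟨hUI, hpB', hp'B'⟩ := AB.bwd hp hp' hB'
      exact ⟨(B' \ {p'}) ∪ {p}, hUI, AB.swap_swap hp'B' hpB'⟩
  exact ⟨by rw [← hbij.image_eq, Set.ncard_image_of_injOn hbij.injOn], hbij⟩
end

section
/- Let E be a finite linearly ordered set and M a matroid on E. If (F'_ε, ..., F'_0, F_c, F_0, ..., F_ι) is a connected filtration of M, then the reversed complements (E \ F_ι, ..., E \ F_0, E \ F_c, E \ F'_0, ..., E \ F'_ε) form a connected filtration of the dual matroid M*, and for 1 ≤ k ≤ ι, (M|F_k)/F_{k-1})* = M*|(E \ F_{k-1}) / (E \ F_k). -/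
open scoped Matroid

namespace AB

/-- The contraction `M / C` of a set in a matroid, defined by duality:
`M / C = (M* restricted to (E \ C))*`. -/
noncomputable def contract {α : Type*} (M : Matroid α) (C : Set α) : Matroid α :=
  (M✶ ↾ (M.E \ C))✶

/-- A loop: an element of the ground set that is dependent on its own. -/
def Loop {α : Type*} (M : Matroid α) (e : α) : Prop := e ∈ M.E ∧ ¬ M.Indep {e}

/-- A coloop: a loop of the dual matroid. -/
def Coloop {α : Type*} (M : Matroid α) (e : α) : Prop := Loop M✶ e

end AB

namespace AB

/-- The minor `(M|G)/F` of a matroid. -/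
noncomputable def minorIC {α : Type*} (M : Matroid α) (G F : Set α) : Matroid α :=
  contract (M ↾ G) F

/-- A connected matroid: nonempty ground set, and any two distinct elements lie in a
common circuit. -/
def MConnected {α : Type*} (M : Matroid α) : Prop :=
  M.E.Nonempty ∧ ∀ e ∈ M.E, ∀ f ∈ M.E, e = f ∨ ∃ C, Circuit M C ∧ e ∈ C ∧ f ∈ C

/-- The matroid is a single loop. -/
def IsLoopMatroid {α : Type*} (M : Matroid α) : Prop := ∃ e, M.E = {e} ∧ Loop M e

/-- The matroid is a single coloop (isthmus). -/
def IsColoopMatroid {α : Type*} (M : Matroid α) : Prop := ∃ e, M.E = {e} ∧ Coloop M e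

/-- `(ε, ι, F', F)` is a connected filtration of the ordered matroid `M`:
a chain `∅ = F'_ε ⊂ ... ⊂ F'_0 = F_c = F_0 ⊂ ... ⊂ F_ι = M.E` such that the minima
`min (F_k \ F_{k-1})` (for `1 ≤ k ≤ ι`) are increasing in `k`, the minima
`min (F'_{k-1} \ F'_k)` (for `1 ≤ k ≤ ε`) are increasing in `k`, each minor
`(M|F_k)/F_{k-1}` is connected and not a loop, and each minor `(M|F'_{k-1})/F'_k`
is connected and not a coloop. -/
def IsConnFiltration {α : Type*} [LinearOrder α] (M : Matroid α)
    (ε ι : ℕ) (F' F : ℕ → Set α) : Prop :=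
  F' ε = ∅ ∧ F' 0 = F 0 ∧ F ι = M.E ∧
  (∀ k, k < ι → F k ⊂ F (k + 1)) ∧
  (∀ k, k < ε → F' (k + 1) ⊂ F' k) ∧
  (∀ k, k + 1 < ι → ∃ a b, IsLeast (F (k + 1) \ F k) a ∧
    IsLeast (F (k + 2) \ F (k + 1)) b ∧ a < b) ∧
  (∀ k, k + 1 < ε → ∃ a b, IsLeast (F' k \ F' (k + 1)) a ∧
    IsLeast (F' (k + 1) \ F' (k + 2)) b ∧ a < b) ∧
  (∀ k, k < ι → MConnected (minorIC M (F (k + 1)) (F k)) ∧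
    ¬ IsLoopMatroid (minorIC M (F (k + 1)) (F k))) ∧
  (∀ k, k < ε → MConnected (minorIC M (F' k) (F' (k + 1))) ∧
    ¬ IsColoopMatroid (minorIC M (F' k) (F' (k + 1))))

end AB

namespace AB
open Set Matroid

variable {α : Type*}

lemma contract_ground (M : Matroid α) (C : Set α) : (contract M C).E = M.E \ C := rfl

lemma dual_contract (M : Matroid α) (C : Set α) :
    (contract M C)✶ = M✶ ↾ (M.E \ C) := by
  rw [contract, Matroid.dual_dual]

lemma dual_restrict (M : Matroid α) {R : Set α} (hR : R ⊆ M.E) :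
    (M ↾ R)✶ = contract M✶ (M.E \ R) := by
  rw [contract, Matroid.dual_dual, Matroid.dual_ground, Set.diff_diff_cancel_left hR]

lemma exch_aux (M : Matroid α) (J : Set α) (y : α) :
    ∀ n (S : Set α), S.Finite → S.ncard ≤ n → y ∈ M.closure (S ∪ J) → y ∉ M.closure J →
      ∃ x ∈ S, x ∈ M.closure ((S \ {x}) ∪ J ∪ {y}) := by
  intro n
  induction n with
  | zero =>
    intro S hfin hcard h1 h2
    rw [Nat.le_zero, Set.ncard_eq_zero hfin] at hcard
    rw [hcard, Set.empty_union] at h1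
    exact absurd h1 h2
  | succ n ih =>
    intro S hfin hcard h1 h2
    by_cases hS : ∃ x ∈ S, y ∈ M.closure ((S \ {x}) ∪ J)
    · obtain ⟨x, hxS, hy⟩ := hS
      obtain ⟨z, hz, hz2⟩ := ih (S \ {x}) (hfin.diff)
        (by have := Set.ncard_diff_singleton_lt_of_mem hxS hfin; omega) hy h2
      refine ⟨z, hz.1, M.closure_subset_closure ?_ hz2⟩
      exact Set.union_subset_union_left _ (Set.union_subset_union_left _
        (Set.diff_subset_diff_left Set.diff_subset))
    · push_neg at hS
      obtain ⟨x, hxS⟩ : S.Nonempty := by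
        rcases S.eq_empty_or_nonempty with rfl | h
        · rw [Set.empty_union] at h1; exact absurd h1 h2
        · exact h
      have hy' := hS x hxS
      have hins : y ∈ M.closure (insert x ((S \ {x}) ∪ J)) \ M.closure ((S \ {x}) ∪ J) := by
        constructor
        · rwa [show insert x ((S \ {x}) ∪ J) = S ∪ J by
            rw [← Set.insert_union, Set.insert_diff_singleton, Set.insert_eq_of_mem hxS]]
        · exact hy'
      have := Matroid.closure_exchange hins
      refine ⟨x, hxS, ?_⟩
      rw [Set.union_singleton]
      exact this.1

lemma contract_base_iff (M : Matroid α) [M.Finite] {C B : Set α} (hC : C ⊆ M.E) :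
    (contract M C).IsBase B ↔ B ⊆ M.E \ C ∧ ∃ J, M.IsBasis J C ∧ M.IsBase (B ∪ J) := by
  rw [contract, Matroid.dual_isBase_iff', Matroid.restrict_ground_eq,
    Matroid.isBase_restrict_iff (by rw [Matroid.dual_ground]; exact Set.diff_subset)]
  constructor
  · rintro ⟨hB', hBE⟩
    have hcompl : M.E \ ((M.E \ C) \ B) = B ∪ C := by
      ext z; constructor
      · rintro ⟨hzE, hz⟩
        by_contra hzB
        exact hz ⟨⟨hzE, fun h => hzB (Or.inr h)⟩, fun h => hzB (Or.inl h)⟩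
      · rintro (hz | hz)
        · exact ⟨(hBE hz).1, fun h => h.2 hz⟩
        · exact ⟨hC hz, fun h => h.1.2 hz⟩
    have key : ∀ B₂, M.IsBase B₂ → Disjoint ((M.E \ C) \ B) B₂ →
        ∀ x ∈ B, x ∉ B₂ → False := by
      intro B₂ hB₂ hdj x hxB hxB₂
      have hxE : x ∈ M.E \ C := hBE hxB
      have hins : M✶.Indep (insert x ((M.E \ C) \ B)) := by
        rw [Matroid.dual_indep_iff_exists']
        refine ⟨Set.insert_subset hxE.1 (Set.diff_subset.trans Set.diff_subset), B₂, hB₂, ?_⟩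
        refine Set.disjoint_left.2 fun z hz => ?_
        rcases Set.mem_insert_iff.1 hz with rfl | hz'
        · exact hxB₂
        · exact fun h => Set.disjoint_left.1 hdj hz' h
      exact ((hB'.mem_of_insert_indep hxE hins).2 hxB)
    obtain ⟨_, B₀, hB₀, hdj⟩ := (Matroid.dual_indep_iff_exists').1 hB'.indep
    have hB₀sub : B₀ ⊆ B ∪ C := fun z hz => by
      by_contra hzB
      have hzmem : z ∈ (M.E \ C) \ B :=
        ⟨⟨hB₀.subset_ground hz, fun h => hzB (Or.inr h)⟩, fun h => hzB (Or.inl h)⟩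
      exact Set.disjoint_left.1 hdj hzmem hz
    have hBB₀ : B ⊆ B₀ := fun x hxB => by
      by_contra hxB₀
      exact key B₀ hB₀ hdj x hxB hxB₀
    have hJC : B₀ \ B ⊆ C := fun z hz => (hB₀sub hz.1).resolve_left hz.2
    have hJind : M.Indep (B₀ \ B) := hB₀.indep.subset Set.diff_subset
    refine ⟨hBE, B₀ \ B, ?_, ?_⟩
    · refine hJind.isBasis_of_subset_of_subset_closure hJC fun y hyC => by_contra fun hy => ?_
      have hyE : y ∈ M.E := hC hyC
      have hyB : y ∉ B := fun h => (hBE h).2 hyC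
      have hyB₀ : y ∉ B₀ := fun h =>
        hy (M.subset_closure _ (hJind.subset_ground) ⟨h, hyB⟩)
      have hycl : y ∈ M.closure (B ∪ (B₀ \ B)) := by
        rw [Set.union_diff_cancel hBB₀, hB₀.closure_eq]; exact hyE
      obtain ⟨x, hxB, hxcl⟩ := exch_aux M (B₀ \ B) y B.ncard B
        (M.set_finite B (hBE.trans Set.diff_subset)) le_rfl hycl hy
      have hxB₀ : x ∈ B₀ := hBB₀ hxB
      -- (B \ {x}) ∪ (B₀ \ B) ⊆ B₀ \ {x}
      have hsub : (B \ {x}) ∪ (B₀ \ B) ⊆ B₀ \ {x} := by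
        rintro z (hz | hz)
        · exact ⟨hBB₀ hz.1, hz.2⟩
        · exact ⟨hz.1, fun h => hz.2 (h ▸ hxB)⟩
      have hyn : y ∉ M.closure (B₀ \ {x}) := by
        intro hymem
        have hx2 : x ∈ M.closure ((B₀ \ {x}) ∪ {y}) := by
          refine M.closure_subset_closure ?_ hxcl
          exact Set.union_subset_union_left _ hsub
        rw [Set.union_singleton, Matroid.closure_insert_eq_of_mem_closure hymem] at hx2
        exact hB₀.indep.notMem_closure_diff_of_mem hxB₀ hx2
      have hyB₀x : y ∉ B₀ \ {x} := fun h => hyB₀ h.1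
      have hind : M.Indep (insert y (B₀ \ {x})) := by
        rw [(hB₀.indep.subset Set.diff_subset).insert_indep_iff_of_notMem hyB₀x]
        exact ⟨hyE, hyn⟩
      have hB₂ : M.IsBase (insert y (B₀ \ {x})) := hB₀.exchange_isBase_of_indep hyB₀ hind
      refine key _ hB₂ ?_ x hxB ?_
      · refine Set.disjoint_right.2 fun z hz => ?_
        rcases Set.mem_insert_iff.1 hz with rfl | hz'
        · exact fun h => h.1.2 hyC
        · exact fun h => Set.disjoint_left.1 hdj h hz'.1
      · intro h
        rcases Set.mem_insert_iff.1 h with rfl | h'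
        · exact (hBE hxB).2 hyC
        · exact h'.2 rfl
    · rwa [Set.union_diff_cancel hBB₀]
  · rintro ⟨hBE, J, hJ, hBJ⟩
    refine ⟨?_, hBE⟩
    have hJC := hJ.subset
    have hB'E : (M.E \ C) \ B ⊆ M✶.E := Set.diff_subset.trans Set.diff_subset
    have hdj : Disjoint ((M.E \ C) \ B) (B ∪ J) := by
      rw [Set.disjoint_union_right]
      exact ⟨Set.disjoint_sdiff_left,
        Set.disjoint_of_subset Set.diff_subset hJC Set.disjoint_sdiff_left⟩
    have hB'ind : M✶.Indep ((M.E \ C) \ B) :=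
      (Matroid.dual_indep_iff_exists').2 ⟨hB'E, B ∪ J, hBJ, hdj⟩
    refine hB'ind.isBasis_of_forall_insert Set.diff_subset ?_
    intro x hx
    have hxB : x ∈ B := by
      by_contra hxB
      exact hx.2 ⟨hx.1, hxB⟩
    have hxE : x ∈ M.E := (hBE hxB).1
    rw [Matroid.dep_iff]
    refine ⟨?_, Set.insert_subset hxE hB'E⟩
    intro hind
    obtain ⟨_, B₁, hB₁, hdj₁⟩ := (Matroid.dual_indep_iff_exists').1 hind
    have hB₁sub : B₁ ⊆ ((B \ {x}) ∪ C) := by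
      intro z hz
      have hzE : z ∈ M.E := hB₁.subset_ground hz
      have hznot : z ∉ insert x ((M.E \ C) \ B) := fun h =>
        Set.disjoint_left.1 hdj₁ h hz
      by_cases hzC : z ∈ C
      · exact Or.inr hzC
      · refine Or.inl ⟨?_, fun h => hznot (h ▸ Set.mem_insert _ _)⟩
        by_contra hzB
        exact hznot (Set.mem_insert_iff.2 (Or.inr ⟨⟨hzE, hzC⟩, hzB⟩))
    have hxcl : x ∈ M.closure B₁ := by rw [hB₁.closure_eq]; exact hxE
    have hstep : M.closure ((B \ {x}) ∪ C) ⊆ M.closure ((B ∪ J) \ {x}) := by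
      have h1 : (B \ {x}) ∪ C ⊆ (B \ {x}) ∪ M.closure J :=
        Set.union_subset_union_right _ hJ.subset_closure
      refine (M.closure_subset_closure h1).trans ?_
      rw [Matroid.closure_union_closure_right_eq]
      refine M.closure_subset_closure ?_
      rintro z (hz | hz)
      · exact ⟨Or.inl hz.1, hz.2⟩
      · exact ⟨Or.inr hz, fun h => (hBE hxB).2 (hJC (h ▸ hz))⟩
    have : x ∈ M.closure ((B ∪ J) \ {x}) := hstep (M.closure_subset_closure hB₁sub hxcl)
    exact hBJ.indep.notMem_closure_diff_of_mem (Or.inl hxB) this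

lemma contract_indep_iff (M : Matroid α) [M.Finite] {C I : Set α} (hC : C ⊆ M.E) :
    (contract M C).Indep I ↔ I ⊆ M.E \ C ∧ ∃ J, M.IsBasis J C ∧ M.Indep (I ∪ J) := by
  constructor
  · intro hI
    obtain ⟨B, hB, hIB⟩ := hI.exists_isBase_superset
    rw [contract_base_iff M hC] at hB
    obtain ⟨hBE, J, hJ, hBJ⟩ := hB
    exact ⟨hIB.trans hBE, J, hJ, hBJ.indep.subset (Set.union_subset_union_left _ hIB)⟩
  · rintro ⟨hIE, J, hJ, hIJ⟩
    obtain ⟨B₀, hB₀, hsub⟩ := hIJ.exists_isBase_superset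
    have hJeq : B₀ ∩ C = J := (hJ.eq_of_subset_indep (hB₀.indep.inter_right C)
        (Set.subset_inter (Set.subset_union_right.trans hsub) hJ.subset)
        Set.inter_subset_right).symm
    have hBase : (contract M C).IsBase (B₀ \ C) := by
      rw [contract_base_iff M hC]
      refine ⟨Set.diff_subset_diff_left hB₀.subset_ground, J, hJ, ?_⟩
      rw [← hJeq, Set.diff_union_inter]
      exact hB₀
    refine hBase.indep.subset (Set.subset_diff.2 ⟨Set.subset_union_left.trans hsub, ?_⟩)
    exact Set.disjoint_left.2 fun z hz => (hIE hz).2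

lemma contract_restrict_comm (M : Matroid α) [M.Finite] {C D : Set α}
    (hC : C ⊆ M.E) (hdj : Disjoint C D) :
    contract (M ↾ (M.E \ D)) C = (contract M C) ↾ ((M.E \ C) \ D) := by
  have hCsub : C ⊆ M.E \ D := Set.subset_diff.2 ⟨hC, hdj⟩
  haveI : (M ↾ (M.E \ D)).Finite := Matroid.restrict_finite (M.ground_finite.diff)
  refine Matroid.ext_indep ?_ ?_
  · rw [contract_ground, Matroid.restrict_ground_eq, Matroid.restrict_ground_eq,
      Set.diff_diff_comm]
  intro I hIE
  rw [contract_indep_iff _ (by rwa [Matroid.restrict_ground_eq]),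
    Matroid.restrict_indep_iff, contract_indep_iff M hC,
    Matroid.restrict_ground_eq]
  constructor
  · rintro ⟨hI, J, hJ, hIJ, hIJE⟩
    rw [Matroid.isBasis_restrict_iff Set.diff_subset] at hJ
    refine ⟨⟨?_, J, hJ.1, hIJ⟩, ?_⟩
    · exact fun z hz => ⟨(hI hz).1.1, (hI hz).2⟩
    · exact fun z hz => ⟨⟨(hI hz).1.1, (hI hz).2⟩, (hI hz).1.2⟩
  · rintro ⟨⟨hI, J, hJ, hIJ⟩, hI2⟩
    have hJD : J ⊆ M.E \ D := hJ.subset.trans hCsub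
    refine ⟨fun z hz => ⟨⟨(hI hz).1, (hI2 hz).2⟩, (hI hz).2⟩, J, ?_, hIJ, ?_⟩
    · rw [Matroid.isBasis_restrict_iff Set.diff_subset]
      exact ⟨hJ, hCsub⟩
    · exact Set.union_subset (fun z hz => ⟨(hI hz).1, (hI2 hz).2⟩) hJD

lemma minorIC_dual (M : Matroid α) [M.Finite] {F G : Set α} (hFG : F ⊆ G) (hG : G ⊆ M.E) :
    (minorIC M G F)✶ = minorIC M✶ (M.E \ F) (M.E \ G) := by
  have hF : F ⊆ M.E := hFG.trans hG
  have hdjF : Disjoint F (M.E \ G) :=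
    Set.disjoint_of_subset_left hFG Set.disjoint_sdiff_right
  have h1 : M ↾ G = M ↾ (M.E \ (M.E \ G)) := by rw [Set.diff_diff_cancel_left hG]
  have hR : (M.E \ F) \ (M.E \ G) ⊆ (contract M F).E := by
    rw [contract_ground]; exact Set.diff_subset
  rw [minorIC, h1, contract_restrict_comm M hF hdjF,
    dual_restrict _ (by rwa [contract_ground] at hR), dual_contract, contract_ground,
    Set.diff_diff_cancel_left (Set.diff_subset_diff_right hFG)]
  rfl

lemma circuit_mem_closure_diff {M : Matroid α} {C : Set α} (hC : Circuit M C) {e : α}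
    (he : e ∈ C) : e ∈ M.closure (C \ {e}) := by
  have hi : M.Indep (C \ {e}) := hC.2 _ (Set.sdiff_singleton_ssubset.2 he)
  rw [hi.mem_closure_iff]
  left
  rw [Set.insert_diff_singleton, Set.insert_eq_of_mem he]
  exact hC.1

lemma MConnected.dual {M : Matroid α} (h : MConnected M) : MConnected M✶ := by
  obtain ⟨hne, hpair⟩ := h
  refine ⟨hne, ?_⟩
  intro e he f hf
  rcases eq_or_ne e f with rfl | hef
  · exact Or.inl rfl
  obtain ⟨C, hC, heC, hfC⟩ := (hpair e he f hf).resolve_left hef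
  right
  have hCe : M.Indep (C \ {e}) := hC.2 _ (Set.sdiff_singleton_ssubset.2 heC)
  obtain ⟨B, hB, hCB⟩ := hCe.exists_isBase_superset
  have hfB : f ∈ B := hCB ⟨hfC, by simpa using hef.symm⟩
  have hfK : f ∈ M.E \ M.closure (B \ {f}) :=
    ⟨hf, hB.indep.notMem_closure_diff_of_mem hfB⟩
  have heK : e ∈ M.E \ M.closure (B \ {f}) := by
    refine ⟨he, fun hecl => ?_⟩
    have h1 : f ∈ M.closure (C \ {f}) := circuit_mem_closure_diff hC hfC
    have h2 : C \ {f} ⊆ insert e (B \ {f}) := by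
      intro z hz
      rcases eq_or_ne z e with rfl | hz'
      · exact Set.mem_insert _ _
      · exact Set.mem_insert_iff.2 (Or.inr ⟨hCB ⟨hz.1, by simpa using hz'⟩, hz.2⟩)
    have h3 : f ∈ M.closure (insert e (B \ {f})) := M.closure_subset_closure h2 h1
    rw [Matroid.closure_insert_eq_of_mem_closure hecl] at h3
    exact hfK.2 h3
  refine ⟨M.E \ M.closure (B \ {f}), ⟨?_, ?_⟩, heK, hfK⟩
  · rw [Matroid.dep_iff]
    refine ⟨?_, Set.diff_subset⟩
    intro hind
    obtain ⟨_, B₁, hB₁, hdj₁⟩ := (Matroid.dual_indep_iff_exists').1 hind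
    have hB₁cl : B₁ ⊆ M.closure (B \ {f}) := fun z hz => by
      by_contra hzcl
      exact Set.disjoint_right.1 hdj₁ hz ⟨hB₁.subset_ground hz, hzcl⟩
    have : M.E ⊆ M.closure (B \ {f}) := by
      rw [← hB₁.closure_eq]
      exact Matroid.closure_subset_closure_of_subset_closure hB₁cl
    exact hfK.2 (this hf)
  · intro D hD
    obtain ⟨x, hxK, hxD⟩ := Set.exists_of_ssubset hD
    have hDE : D ⊆ M.E := hD.subset.trans Set.diff_subset
    have hDcl : ∀ z ∈ D, z ∉ M.closure (B \ {f}) := fun z hz => (hD.subset hz).2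
    rcases eq_or_ne x f with rfl | hxf
    · refine (Matroid.dual_indep_iff_exists').2 ⟨hDE, B, hB, ?_⟩
      refine Set.disjoint_left.2 fun z hz hzB => ?_
      rcases eq_or_ne z x with rfl | hzx
      · exact hxD hz
      · exact hDcl z hz (M.subset_closure _
          (Set.diff_subset.trans hB.subset_ground) ⟨hzB, hzx⟩)
    · have hxB : x ∉ B := by
        intro hxB
        rcases eq_or_ne x f with rfl | h
        · exact hxf rfl
        · exact hxK.2 (M.subset_closure _
            (Set.diff_subset.trans hB.subset_ground) ⟨hxB, h⟩)
      have hxBf : x ∉ B \ {f} := fun h => hxB h.1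
      have hind : M.Indep (insert x (B \ {f})) := by
        rw [(hB.indep.subset Set.diff_subset).insert_indep_iff_of_notMem hxBf]
        exact ⟨hxK.1, hxK.2⟩
      have hB₂ : M.IsBase (insert x (B \ {f})) := hB.exchange_isBase_of_indep hxB hind
      refine (Matroid.dual_indep_iff_exists').2 ⟨hDE, _, hB₂, ?_⟩
      refine Set.disjoint_left.2 fun z hz hzB => ?_
      rcases Set.mem_insert_iff.1 hzB with rfl | hzB'
      · exact hxD hz
      · exact hDcl z hz (M.subset_closure _
          (Set.diff_subset.trans hB.subset_ground) hzB')

lemma isLoopMatroid_dual_iff {N : Matroid α} : IsLoopMatroid N✶ ↔ IsColoopMatroid N :=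
  Iff.rfl

lemma isColoopMatroid_dual_iff {N : Matroid α} : IsColoopMatroid N✶ ↔ IsLoopMatroid N := by
  unfold IsColoopMatroid IsLoopMatroid Coloop
  simp only [Matroid.dual_dual, Matroid.dual_ground]

end AB

/-- If `(F'_ε,...,F'_0,F_c,F_0,...,F_ι)` is a connected filtration of
`M`, then the reversed complements form a connected filtration of the dual `M✶`, and for
`1 ≤ k ≤ ι`, `((M|F_k)/F_{k-1})✶ = M✶|(E \ F_{k-1}) / (E \ F_k)`. -/
theorem stmt_12 {α : Type*} [LinearOrder α] (M : Matroid α) [M.Finite]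
    (ε ι : ℕ) (F' F : ℕ → Set α) (h : AB.IsConnFiltration M ε ι F' F) :
    AB.IsConnFiltration M✶ ι ε (fun k => M.E \ F k) (fun k => M.E \ F' k) ∧
      ∀ k, k < ι →
        (AB.minorIC M (F (k + 1)) (F k))✶
          = AB.minorIC M✶ (M.E \ F k) (M.E \ F (k + 1)) := by
  obtain ⟨h1, h2, h3, h4, h5, h6, h7, h8, h9⟩ := h
  have hFm : ∀ j, j ≤ ι → ∀ i, i ≤ j → F i ⊆ F j := by
    intro j
    induction j with
    | zero => intro _ i hi; rw [Nat.le_zero.1 hi]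
    | succ n ih =>
      intro hj i hi
      rcases Nat.eq_or_lt_of_le hi with rfl | hlt
      · exact subset_rfl
      · exact (ih (by omega) i (by omega)).trans (h4 n (by omega)).subset
  have hF'm : ∀ j, j ≤ ε → ∀ i, i ≤ j → F' j ⊆ F' i := by
    intro j
    induction j with
    | zero => intro _ i hi; rw [Nat.le_zero.1 hi]
    | succ n ih =>
      intro hj i hi
      rcases Nat.eq_or_lt_of_le hi with rfl | hlt
      · exact subset_rfl
      · exact ((h5 n (by omega)).subset).trans (ih (by omega) i (by omega))
  have hFE : ∀ k, k ≤ ι → F k ⊆ M.E := by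
    intro k hk
    have b := hFm ι le_rfl k hk
    rwa [h3] at b
  have hF'E : ∀ k, k ≤ ε → F' k ⊆ M.E := by
    intro k hk
    have a : F' k ⊆ F' 0 := hF'm k hk 0 (Nat.zero_le _)
    rw [h2] at a
    have b := hFm ι le_rfl 0 (Nat.zero_le _)
    rw [h3] at b
    exact a.trans b
  have hdd : ∀ {A B : Set α}, B ⊆ M.E → (M.E \ A) \ (M.E \ B) = B \ A := by
    intro A B hB
    ext x
    constructor
    · rintro ⟨⟨hxE, hxA⟩, hx2⟩
      by_cases hxB : x ∈ B
      · exact ⟨hxB, hxA⟩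
      · exact absurd ⟨hxE, hxB⟩ hx2
    · rintro ⟨hxB, hxA⟩
      exact ⟨⟨hB hxB, hxA⟩, fun hc => hc.2 hxB⟩
  have hcs : ∀ {A B : Set α}, A ⊂ B → B ⊆ M.E → M.E \ B ⊂ M.E \ A := by
    intro A B hAB hB
    refine ⟨Set.diff_subset_diff_right hAB.subset, fun hsup => ?_⟩
    obtain ⟨x, hxB, hxA⟩ := Set.exists_of_ssubset hAB
    exact (hsup ⟨hB hxB, hxA⟩).2 hxB
  have hdual : ∀ k, k < ι →
      (AB.minorIC M (F (k + 1)) (F k))✶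
        = AB.minorIC M✶ (M.E \ F k) (M.E \ F (k + 1)) :=
    fun k hk => AB.minorIC_dual M (h4 k hk).subset (hFE (k + 1) hk)
  have hdual' : ∀ k, k < ε →
      (AB.minorIC M (F' k) (F' (k + 1)))✶
        = AB.minorIC M✶ (M.E \ F' (k + 1)) (M.E \ F' k) :=
    fun k hk => AB.minorIC_dual M (h5 k hk).subset (hF'E k hk.le)
  refine ⟨⟨?_, ?_, ?_, ?_, ?_, ?_, ?_, ?_, ?_⟩, hdual⟩
  · show M.E \ F ι = ∅
    rw [h3, Set.diff_self]
  · show M.E \ F 0 = M.E \ F' 0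
    rw [h2]
  · show M.E \ F' ε = M✶.E
    rw [h1, Set.diff_empty]
    rfl
  · exact fun k hk => hcs (h5 k hk) (hF'E k hk.le)
  · exact fun k hk => hcs (h4 k hk) (hFE (k + 1) hk)
  · intro k hk
    show ∃ a b, IsLeast ((M.E \ F' (k + 1)) \ (M.E \ F' k)) a ∧
      IsLeast ((M.E \ F' (k + 2)) \ (M.E \ F' (k + 1))) b ∧ a < b
    rw [hdd (hF'E k (by omega)), hdd (hF'E (k + 1) (by omega))]
    exact h7 k hk
  · intro k hk
    show ∃ a b, IsLeast ((M.E \ F k) \ (M.E \ F (k + 1))) a ∧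
      IsLeast ((M.E \ F (k + 1)) \ (M.E \ F (k + 2))) b ∧ a < b
    rw [hdd (hFE (k + 1) (by omega)), hdd (hFE (k + 2) (by omega))]
    exact h6 k hk
  · intro k hk
    show AB.MConnected (AB.minorIC M✶ (M.E \ F' (k + 1)) (M.E \ F' k)) ∧
      ¬ AB.IsLoopMatroid (AB.minorIC M✶ (M.E \ F' (k + 1)) (M.E \ F' k))
    rw [← hdual' k hk]
    exact ⟨(h9 k hk).1.dual, fun hl => (h9 k hk).2 (AB.isLoopMatroid_dual_iff.1 hl)⟩
  · intro k hk
    show AB.MConnected (AB.minorIC M✶ (M.E \ F k) (M.E \ F (k + 1))) ∧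
      ¬ AB.IsColoopMatroid (AB.minorIC M✶ (M.E \ F k) (M.E \ F (k + 1)))
    rw [← hdual k hk]
    exact ⟨(h8 k hk).1.dual, fun hl => (h8 k hk).2 (AB.isColoopMatroid_dual_iff.1 hl)⟩
end

section
/- Let G be a finite directed graph whose edge set E is linearly ordered, and suppose G is acyclic. Let ι = |O*(G)| be the number of edges e that are the minimum edge of some directed cocycle of G. Then the 2^ι orientations obtained from G by reversing, for any subset S of the parts of the active partition of G, all edges in those parts, are all acyclic and have the same set of dual-active edges O*(G). -/
namespace AB

variable {V E : Type*}

/-- `C` is (the edge set of) a directed cycle of the directed multigraph with edge-source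
map `src` and edge-target map `tgt`: a nonempty cyclic sequence of distinct edges, each one
starting where the previous one ends. -/
def IsDirCycle (src tgt : E → V) (C : Set E) : Prop :=
  ∃ n : ℕ, ∃ hn : 0 < n, ∃ f : Fin n → E, Function.Injective f ∧
    (∀ i : Fin n, tgt (f i) = src (f ⟨(i.1 + 1) % n, Nat.mod_lt _ hn⟩)) ∧
    C = Set.range f

/-- The graph is acyclic: it has no directed cycle. -/
def Acyclic (src tgt : E → V) : Prop := ¬ ∃ C, IsDirCycle src tgt C

/-- The directed cut determined by a vertex set `S`: all edges leaving `S`. -/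
def dirCutOf (src tgt : E → V) (S : Set V) : Set E :=
  {e | src e ∈ S ∧ tgt e ∉ S}

/-- `D` is a directed cut: a nonempty set of edges all leaving some vertex set `S` which
no edge enters. -/
def IsDirCut (src tgt : E → V) (D : Set E) : Prop :=
  ∃ S : Set V, D = dirCutOf src tgt S ∧ dirCutOf tgt src S = ∅ ∧ D.Nonempty

/-- `D` is a directed cocycle (directed bond): a minimal directed cut. -/
def IsDirCocycle (src tgt : E → V) (D : Set E) : Prop :=
  IsDirCut src tgt D ∧ ∀ D', IsDirCut src tgt D' → D' ⊆ D → D' = D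

end AB

attribute [local instance] Classical.propDecidable

namespace AB

/-- The set `O*(G)` of dual-active edges: minima of directed cocycles. -/
def dualActive {V E : Type*} [LinearOrder E] (src tgt : E → V) : Set E :=
  {a | ∃ D, IsDirCocycle src tgt D ∧ IsLeast D a}

/-- The part of the active partition associated with a dual-active edge `a`:
the union of the directed cocycles with minimum `a`, minus the union of the directed
cocycles with minimum greater than `a`. -/
def activePart {V E : Type*} [LinearOrder E] (src tgt : E → V) (a : E) : Set E :=
  {e | ∃ D, IsDirCocycle src tgt D ∧ IsLeast D a ∧ e ∈ D} \
    {e | ∃ D m, IsDirCocycle src tgt D ∧ IsLeast D m ∧ a < m ∧ e ∈ D}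

/-- The orientation obtained by reversing the edges in `A`. -/
noncomputable def reorientSrc {V E : Type*} (src tgt : E → V) (A : Set E) : E → V :=
  fun e => if e ∈ A then tgt e else src e

end AB


namespace AB

universe u v
variable {V : Type u} {E : Type v}

/-! ### basic cut machinery -/

def Closed (src tgt : E → V) (S : Set V) : Prop := ∀ e, tgt e ∈ S → src e ∈ S

lemma isDirCut_iff {src tgt : E → V} {D : Set E} :
    IsDirCut src tgt D ↔ ∃ S, Closed src tgt S ∧ D = dirCutOf src tgt S ∧ D.Nonempty := by
  constructor
  · rintro ⟨S, h1, h2, h3⟩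
    refine ⟨S, ?_, h1, h3⟩
    intro e he
    by_contra hs
    have h : e ∈ dirCutOf tgt src S := ⟨he, hs⟩
    rw [h2] at h
    exact h
  · rintro ⟨S, h1, h2, h3⟩
    refine ⟨S, h2, ?_, h3⟩
    ext e
    simp only [dirCutOf, Set.mem_setOf_eq, Set.mem_empty_iff_false, iff_false, not_and, not_not]
    exact h1 e

def CutIn (src tgt : E → V) (U : Set E) : Set E :=
  {e | ∃ D, IsDirCut src tgt D ∧ e ∈ D ∧ D ⊆ U}

lemma CutIn_mono {src tgt : E → V} {U U' : Set E} (h : U ⊆ U') :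
    CutIn src tgt U ⊆ CutIn src tgt U' := by
  rintro e ⟨D, hD, he, hU⟩; exact ⟨D, hD, he, hU.trans h⟩

def stp (src tgt : E → V) (u v : V) : Prop := ∃ e, src e = u ∧ tgt e = v

def WalkFree (src tgt : E → V) : Prop :=
  ∀ e, ¬ Relation.ReflTransGen (stp src tgt) (tgt e) (src e)

lemma rtg_mem {r : V → V → Prop} {S : Set V} (hS : ∀ u v, r u v → v ∈ S → u ∈ S)
    {a b : V} (h : Relation.ReflTransGen r a b) (hb : b ∈ S) : a ∈ S := by
  induction h with
  | refl => exact hb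
  | tail _ hcb ih => exact ih (hS _ _ hcb hb)

lemma rtg_enter {r : V → V → Prop} {S : Set V} {a b : V}
    (h : Relation.ReflTransGen r a b) (ha : a ∉ S) (hb : b ∈ S) :
    ∃ u v, r u v ∧ u ∉ S ∧ v ∈ S ∧ Relation.ReflTransGen r a u ∧ Relation.ReflTransGen r v b := by
  induction h with
  | refl => exact absurd hb ha
  | @tail c d hac hcd ih =>
    by_cases hc : c ∈ S
    · obtain ⟨u, v, h1, h2, h3, h4, h5⟩ := ih hc
      exact ⟨u, v, h1, h2, h3, h4, h5.tail hcd⟩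
    · exact ⟨c, d, hcd, hc, hb, hac, Relation.ReflTransGen.refl⟩

lemma closed_rtg {src tgt : E → V} {S : Set V} (hS : Closed src tgt S) {a b : V}
    (h : Relation.ReflTransGen (stp src tgt) a b) (hb : b ∈ S) : a ∈ S := by
  refine rtg_mem (fun u v huv hv => ?_) h hb
  obtain ⟨e, he1, he2⟩ := huv
  subst he1; subst he2; exact hS e hv

lemma mem_cutIn_univ {src tgt : E → V} (hWF : WalkFree src tgt) (e : E) :
    e ∈ CutIn src tgt Set.univ := by
  classical
  set S : Set V := {v | Relation.ReflTransGen (stp src tgt) v (src e)} with hSdef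
  have hcl : Closed src tgt S := by
    intro g hg
    exact Relation.ReflTransGen.head ⟨g, rfl, rfl⟩ hg
  have hsrc : src e ∈ S := Relation.ReflTransGen.refl
  have htgt : tgt e ∉ S := fun h => hWF e h
  exact ⟨dirCutOf src tgt S, isDirCut_iff.mpr ⟨S, hcl, rfl, ⟨e, hsrc, htgt⟩⟩,
    ⟨hsrc, htgt⟩, fun _ _ => trivial⟩

/-- Cocycle refinement: through every edge of a directed cut there is a directed
cocycle contained in the cut. -/
theorem cocycle_refine {src tgt : E → V} {D : Set E} (hD : IsDirCut src tgt D) {e : E}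
    (he : e ∈ D) : ∃ D', IsDirCocycle src tgt D' ∧ e ∈ D' ∧ D' ⊆ D := by
  classical
  obtain ⟨S₀, hS₀c, hS₀D, -⟩ := isDirCut_iff.mp hD
  -- the family of witnesses
  set F : Set (Set V) := {S | Closed src tgt S ∧ e ∈ dirCutOf src tgt S ∧ dirCutOf src tgt S ⊆ D}
    with hF
  have hS₀F : S₀ ∈ F := ⟨hS₀c, hS₀D ▸ he, hS₀D ▸ le_refl D⟩
  set Sm : Set V := ⋂₀ F with hSm
  have hsrcSm : src e ∈ Sm := by
    intro S hS; exact hS.2.1.1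
  have htgtSm : tgt e ∉ Sm := fun h => (hS₀D ▸ he : e ∈ dirCutOf src tgt S₀).2 (h S₀ hS₀F)
  have hSmc : Closed src tgt Sm := by
    intro g hg S hS
    exact hS.1 g (hg S hS)
  have hSmD : dirCutOf src tgt Sm ⊆ D := by
    rintro g ⟨hg1, hg2⟩
    simp only [hSm, Set.mem_sInter, not_forall] at hg2
    obtain ⟨S, hS, hgS⟩ := hg2
    exact hS.2.2 ⟨hg1 S hS, hgS⟩
  have hSmF : Sm ∈ F := ⟨hSmc, ⟨hsrcSm, htgtSm⟩, hSmD⟩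
  have hSmmin : ∀ S ∈ F, Sm ⊆ S := fun S hS x hx => hx S hS
  -- adjacency within complement of Sm
  set adj : V → V → Prop := fun u v => u ∉ Sm ∧ v ∉ Sm ∧
    (∃ g, (src g = u ∧ tgt g = v) ∨ (src g = v ∧ tgt g = u)) with hadj
  set K : Set V := {x | Relation.ReflTransGen adj (tgt e) x} with hK
  have htgtK : tgt e ∈ K := Relation.ReflTransGen.refl
  have hKSm : ∀ x ∈ K, x ∉ Sm := by
    intro x hx
    induction hx with
    | refl => exact htgtSm
    | tail _ hcx _ => exact hcx.2.1
  -- the cocycle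
  set Sh : Set V := Kᶜ with hSh
  have hsrcSh : src e ∈ Sh := fun h => hKSm _ h hsrcSm
  have hShc : Closed src tgt Sh := by
    intro g hg
    by_contra hsrcK
    simp only [hSh, Set.mem_compl_iff, not_not] at hsrcK
    -- src g ∈ K; tgt g ∉ K
    by_cases htg : tgt g ∈ Sm
    · exact hKSm _ hsrcK (hSmc g htg)
    · exact hg (Relation.ReflTransGen.tail hsrcK ⟨hKSm _ hsrcK, htg, ⟨g, Or.inl ⟨rfl, rfl⟩⟩⟩)
  have hDh_src : ∀ g ∈ dirCutOf src tgt Sh, src g ∈ Sm := by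
    rintro g ⟨hg1, hg2⟩
    by_contra hsm
    simp only [hSh, Set.mem_compl_iff, not_not] at hg2
    exact hg1 (Relation.ReflTransGen.tail hg2 ⟨hKSm _ hg2, hsm, ⟨g, Or.inr ⟨rfl, rfl⟩⟩⟩)
  have hDhD : dirCutOf src tgt Sh ⊆ D := by
    rintro g hg
    have h1 := hDh_src g hg
    have h2 : tgt g ∉ Sm := hKSm _ (not_not.mp hg.2)
    exact hSmD ⟨h1, h2⟩
  have heDh : e ∈ dirCutOf src tgt Sh := ⟨hsrcSh, not_not.mpr htgtK⟩
  have hcut : IsDirCut src tgt (dirCutOf src tgt Sh) :=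
    isDirCut_iff.mpr ⟨Sh, hShc, rfl, ⟨e, heDh⟩⟩
  refine ⟨dirCutOf src tgt Sh, ⟨hcut, ?_⟩, heDh, hDhD⟩
  -- minimality
  rintro D₁ hD₁ hsub
  obtain ⟨S₁, hS₁c, hS₁D, hS₁ne⟩ := isDirCut_iff.mp hD₁
  -- step 1 : e ∈ D₁
  have he₁ : e ∈ D₁ := by
    by_contra he₁
    by_cases hse : src e ∈ S₁
    · -- then tgt e ∈ S₁, and K ⊆ S₁, contradicting D₁ nonempty
      have hte : tgt e ∈ S₁ := by
        by_contra hte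
        exact he₁ (hS₁D ▸ ⟨hse, hte⟩)
      have hKS₁ : ∀ x ∈ K, x ∈ S₁ := by
        intro x hx
        induction hx with
        | refl => exact hte
        | @tail c x hc hcx ih =>
          by_contra hxS₁
          obtain ⟨g, hg | hg⟩ := hcx.2.2
          · -- src g = c ∈ S₁, tgt g = x ∉ S₁ : g ∈ D₁ ⊆ dirCutOf Sh, so src g ∉ K, contra
            have : g ∈ D₁ := hS₁D ▸ ⟨hg.1 ▸ ih, hg.2 ▸ hxS₁⟩
            have h2 := hsub this
            have : src g ∉ K := h2.1
            exact this (hg.1 ▸ hc)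
          · -- src g = x, tgt g = c ∈ S₁ : closedness of S₁ forces x ∈ S₁
            exact hxS₁ (hg.1 ▸ hS₁c g (hg.2 ▸ ih))
      obtain ⟨d, hd⟩ := hS₁ne
      have := hsub hd
      have h2 : tgt d ∈ K := not_not.mp this.2
      exact (hS₁D ▸ hd : d ∈ dirCutOf src tgt S₁).2 (hKS₁ _ h2)
    · -- src e ∉ S₁ : Sm \ S₁ is a witness, forcing Sm ∩ S₁ = ∅, contradicting D₁ ≠ ∅
      set S' : Set V := Sm \ S₁ with hS'
      have hS'c : Closed src tgt S' := by
        rintro g ⟨hg1, hg2⟩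
        refine ⟨hSmc g hg1, fun hsg => ?_⟩
        have hD1 : g ∈ D₁ := hS₁D ▸ ⟨hsg, hg2⟩
        have htK : tgt g ∈ K := not_not.mp (hsub hD1).2
        exact hKSm _ htK hg1
      have hS'F : S' ∈ F := by
        refine ⟨hS'c, ⟨⟨hsrcSm, hse⟩, htgtSm ∘ fun h => h.1⟩, ?_⟩
        rintro g ⟨⟨hg1, hg2⟩, hg3⟩
        by_cases htg : tgt g ∈ Sm
        · -- then tgt g ∈ S₁ (else in S'), entering S₁ from outside: contradiction
          have htg1 : tgt g ∈ S₁ := by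
            by_contra h; exact hg3 ⟨htg, h⟩
          exact absurd (hS₁c g htg1) hg2
        · exact hSmD ⟨hg1, htg⟩
      have : Sm ⊆ S' := hSmmin _ hS'F
      obtain ⟨d, hd⟩ := hS₁ne
      have hdh := hsub hd
      have hdSm : src d ∈ Sm := hDh_src d hdh
      exact (this hdSm).2 (hS₁D ▸ hd : d ∈ dirCutOf src tgt S₁).1
  -- step 2 : D₁ = D*
  have hS₁F : S₁ ∈ F := ⟨hS₁c, hS₁D ▸ he₁, hS₁D ▸ hsub.trans hDhD⟩
  have hSmS₁ : Sm ⊆ S₁ := hSmmin _ hS₁F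
  have hteS₁ : tgt e ∉ S₁ := (hS₁D ▸ he₁ : e ∈ dirCutOf src tgt S₁).2
  have hKS₁ : ∀ x ∈ K, x ∉ S₁ := by
    intro x hx
    induction hx with
    | refl => exact hteS₁
    | @tail c x hc hcx ih =>
      intro hxS₁
      obtain ⟨g, hg | hg⟩ := hcx.2.2
      · -- src g = c ∉ S₁, tgt g = x ∈ S₁ : violates closedness of S₁
        exact ih (hg.1 ▸ hS₁c g (hg.2 ▸ hxS₁))
      · -- src g = x ∈ S₁, tgt g = c ∉ S₁ : g ∈ D₁ ⊆ D*, so src g ∈ Sm, but x ∉ Sm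
        have hD1 : g ∈ D₁ := hS₁D ▸ ⟨hg.1 ▸ hxS₁, hg.2 ▸ ih⟩
        have := hDh_src g (hsub hD1)
        exact hcx.2.1 (hg.1 ▸ this)
  apply Set.Subset.antisymm hsub
  rintro g ⟨hg1, hg2⟩
  have htgK : tgt g ∈ K := not_not.mp hg2
  have h1 : src g ∈ S₁ := hSmS₁ (hDh_src g ⟨hg1, hg2⟩)
  have h2 : tgt g ∉ S₁ := hKS₁ _ htgK
  exact hS₁D ▸ ⟨h1, h2⟩

def cutActive [LinearOrder E] (src tgt : E → V) : Set E :=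
  {a | a ∈ CutIn src tgt (Set.Ici a)}
def part [LinearOrder E] (src tgt : E → V) (a : E) : Set E :=
  CutIn src tgt (Set.Ici a) \ CutIn src tgt (Set.Ioi a)

/-- every nonempty edge set has a least element -/
lemma exists_isLeast [Fintype E] [LinearOrder E] {D : Set E} (hne : D.Nonempty) : ∃ m, IsLeast D m ∧ m ∈ D := by
  classical
  have hfin : D.Finite := Set.toFinite D
  obtain ⟨m, hmD, hmin⟩ := Set.exists_min_image D id hfin hne
  exact ⟨m, ⟨hmD, fun x hx => hmin x hx⟩, hmD⟩


section trans
variable [Fintype E] [LinearOrder E] (src tgt : E → V)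

lemma cut_nonempty {D : Set E} (h : IsDirCut src tgt D) : D.Nonempty := by
  obtain ⟨S, _, _, hne⟩ := h; exact hne

lemma dualActive_eq_cutActive : dualActive src tgt = cutActive src tgt := by
  ext a
  constructor
  · rintro ⟨D, hcoc, hleast⟩
    exact ⟨D, hcoc.1, hleast.1, fun x hx => hleast.2 hx⟩
  · rintro ⟨D, hcut, haD, hDU⟩
    obtain ⟨D', hcoc, haD', hsub⟩ := cocycle_refine hcut haD
    exact ⟨D', hcoc, haD', fun x hx => hDU (hsub hx)⟩

lemma activePart_eq_part (a : E) : activePart src tgt a = part src tgt a := by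
  have h2 : {e | ∃ D m, IsDirCocycle src tgt D ∧ IsLeast D m ∧ a < m ∧ e ∈ D}
      = CutIn src tgt (Set.Ioi a) := by
    ext e
    constructor
    · rintro ⟨D, m, hcoc, hleast, ham, heD⟩
      exact ⟨D, hcoc.1, heD, fun x hx => lt_of_lt_of_le ham (hleast.2 hx)⟩
    · rintro ⟨D, hcut, heD, hDU⟩
      obtain ⟨D', hcoc, heD', hsub⟩ := cocycle_refine hcut heD
      obtain ⟨m, hleast, hmD⟩ := exists_isLeast (E := E) ⟨e, heD'⟩
      exact ⟨D', m, hcoc, hleast, hDU (hsub hmD), heD'⟩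
  have h1 : {e | ∃ D, IsDirCocycle src tgt D ∧ IsLeast D a ∧ e ∈ D}
      ∪ CutIn src tgt (Set.Ioi a) = CutIn src tgt (Set.Ici a) := by
    ext e
    constructor
    · rintro (⟨D, hcoc, hleast, heD⟩ | ⟨D, hcut, heD, hDU⟩)
      · exact ⟨D, hcoc.1, heD, fun x hx => hleast.2 hx⟩
      · exact ⟨D, hcut, heD, fun x hx => le_of_lt (hDU hx)⟩
    · rintro ⟨D, hcut, heD, hDU⟩
      obtain ⟨D', hcoc, heD', hsub⟩ := cocycle_refine hcut heD
      obtain ⟨m, hleast, hmD⟩ := exists_isLeast (E := E) ⟨e, heD'⟩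
      rcases eq_or_lt_of_le (hDU (hsub hmD) : a ≤ m) with h | h
      · exact Or.inl ⟨D', hcoc, h ▸ hleast, heD'⟩
      · exact Or.inr ⟨D', hcoc.1, heD', fun x hx => lt_of_lt_of_le h (hleast.2 hx)⟩
  unfold activePart part
  rw [h2, ← h1, Set.union_diff_right]

lemma cutActive_mem_cutIn {a : E} (h : a ∈ cutActive src tgt) :
    a ∈ CutIn src tgt (Set.Ici a) := h

end trans

/-- edge-walks as lists -/
inductive Wk (src tgt : E → V) : V → List E → V → Prop
  | nil (v : V) : Wk src tgt v [] v
  | cons (e : E) {l : List E} {v : V} (h : Wk src tgt (tgt e) l v) : Wk src tgt (src e) (e :: l) v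

variable {src tgt : E → V}

lemma wk_of_rtg {u v : V} (h : Relation.ReflTransGen (stp src tgt) u v) :
    ∃ l, Wk src tgt u l v := by
  induction h using Relation.ReflTransGen.head_induction_on with
  | refl => exact ⟨[], Wk.nil v⟩
  | head h' _ ih =>
    obtain ⟨e, he1, he2⟩ := h'
    obtain ⟨l, hl⟩ := ih
    exact ⟨e :: l, he1 ▸ Wk.cons e (he2 ▸ hl)⟩

lemma wk_append {p q : List E} {u v : V} :
    Wk src tgt u (p ++ q) v ↔ ∃ w, Wk src tgt u p w ∧ Wk src tgt w q v := by
  induction p generalizing u with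
  | nil =>
    simp only [List.nil_append]
    exact ⟨fun h => ⟨u, Wk.nil u, h⟩, fun ⟨w, hw, h⟩ => by cases hw; exact h⟩
  | cons e t ih =>
    constructor
    · intro h
      cases h with
      | cons _ h' =>
        obtain ⟨w, h1, h2⟩ := ih.mp h'
        exact ⟨w, Wk.cons e h1, h2⟩
    · rintro ⟨w, hw, h⟩
      cases hw with
      | cons _ h' => exact Wk.cons e (ih.mpr ⟨w, h', h⟩)

lemma wk_head {l : List E} {u v : V} (h : Wk src tgt u l v) (hl : 0 < l.length) :
    src (l.get ⟨0, hl⟩) = u := by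
  cases h with
  | nil => simp at hl
  | cons e h' => rfl

lemma wk_nil_eq {u v : V} (h : Wk src tgt u [] v) : u = v := by cases h; rfl

lemma wk_last {l : List E} {u v : V} (h : Wk src tgt u l v) (hl : 0 < l.length) :
    tgt (l.get ⟨l.length - 1, by omega⟩) = v := by
  induction h with
  | nil => simp at hl
  | @cons e l' v h' ih =>
    cases l' with
    | nil => simpa using wk_nil_eq h'
    | cons e' t =>
      have h2 := ih (by simp)
      simpa using h2

lemma wk_adj {l : List E} {u v : V} (h : Wk src tgt u l v) :
    ∀ i (hi : i + 1 < l.length), tgt (l.get ⟨i, by omega⟩) = src (l.get ⟨i + 1, hi⟩) := by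
  induction h with
  | nil => intro i hi; simp at hi
  | @cons e l' v h' ih =>
    intro i hi
    cases i with
    | zero =>
      have h0 : 0 < l'.length := by simpa using hi
      simpa using (wk_head h' h0).symm
    | succ j =>
      have hj : j + 1 < l'.length := by simpa using hi
      simpa using ih j hj

lemma not_nodup_split {l : List E} (h : ¬ l.Nodup) :
    ∃ (x : E) (l₁ l₂ l₃ : List E), l = l₁ ++ x :: l₂ ++ x :: l₃ := by
  induction l with
  | nil => simp at h
  | cons a t ih =>
    by_cases hat : a ∈ t
    · obtain ⟨s, r, hsr⟩ := List.append_of_mem hat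
      exact ⟨a, [], s, r, by simp [hsr]⟩
    · have : ¬ t.Nodup := by
        intro hn; exact h (List.nodup_cons.mpr ⟨hat, hn⟩)
      obtain ⟨x, l₁, l₂, l₃, hl⟩ := ih this
      exact ⟨x, a :: l₁, l₂, l₃, by simp [hl]⟩

lemma cycle_of_wk : ∀ (N : ℕ) (l : List E) (u : V), l.length ≤ N → Wk src tgt u l u →
    l ≠ [] → ∃ C, IsDirCycle src tgt C := by
  intro N
  induction N with
  | zero =>
    intro l u hN hw hne
    cases l with
    | nil => exact absurd rfl hne
    | cons a t => simp at hN
  | succ N ih =>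
    intro l u hN hw hne
    by_cases hnd : l.Nodup
    · -- build the cycle
      have hlen : 0 < l.length := List.length_pos_iff.mpr hne
      refine ⟨Set.range (fun i : Fin l.length => l.get i), l.length, hlen, l.get,
        List.nodup_iff_injective_get.mp hnd, ?_, rfl⟩
      intro i
      by_cases hi : i.1 + 1 < l.length
      · have hmod : (i.1 + 1) % l.length = i.1 + 1 := Nat.mod_eq_of_lt hi
        have hidx : (⟨(i.1 + 1) % l.length, Nat.mod_lt _ hlen⟩ : Fin l.length)
            = ⟨i.1 + 1, hi⟩ := Fin.mk_eq_mk.mpr hmod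
        rw [hidx]
        exact wk_adj hw i.1 hi
      · have hlast : i.1 = l.length - 1 := by omega
        have hmod : (i.1 + 1) % l.length = 0 := by
          have : i.1 + 1 = l.length := by omega
          rw [this, Nat.mod_self]
        have h1 : tgt (l.get i) = u := by
          have := wk_last hw hlen
          rw [show i = (⟨l.length - 1, by omega⟩ : Fin l.length) from Fin.ext hlast]
          exact this
        have h2 : src (l.get ⟨(i.1 + 1) % l.length, Nat.mod_lt _ hlen⟩) = u := by
          rw [show (⟨(i.1 + 1) % l.length, Nat.mod_lt _ hlen⟩ : Fin l.length)
            = ⟨0, hlen⟩ from Fin.ext hmod]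
          exact wk_head hw hlen
        rw [h1, h2]
    · obtain ⟨x, l₁, l₂, l₃, hl⟩ := not_nodup_split hnd
      subst hl
      obtain ⟨w₁, hw₁, hw₂⟩ := wk_append.mp hw
      cases hw₂ with
      | cons _ h' =>
        obtain ⟨w₂, hwa, hwb⟩ := wk_append.mp hw₁
        cases hwb with
        | cons _ h'' =>
          refine ih (x :: l₂) (src x) ?_ (Wk.cons x h'') (by simp)
          have := hN
          simp only [List.length_append, List.length_cons] at this ⊢
          omega

lemma acyclic_iff_walkFree : Acyclic src tgt ↔ WalkFree src tgt := by
  constructor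
  · intro hacyc e he
    apply hacyc
    obtain ⟨l, hl⟩ := wk_of_rtg he
    exact cycle_of_wk (l.length + 1) (e :: l) (src e) (by simp) (Wk.cons e hl) (by simp)
  · rintro hWF ⟨C, n, hn, f, hinj, hchain, hC⟩
    -- walk around the cycle
    have hstep : ∀ m : ℕ, stp src tgt (src (f ⟨m % n, Nat.mod_lt _ hn⟩))
        (src (f ⟨(m + 1) % n, Nat.mod_lt _ hn⟩)) := by
      intro m
      refine ⟨f ⟨m % n, Nat.mod_lt _ hn⟩, rfl, ?_⟩
      rw [hchain ⟨m % n, Nat.mod_lt _ hn⟩]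
      have hidx : (⟨(m % n + 1) % n, Nat.mod_lt _ hn⟩ : Fin n)
          = ⟨(m + 1) % n, Nat.mod_lt _ hn⟩ := Fin.mk_eq_mk.mpr (Nat.mod_add_mod m n 1)
      rw [hidx]
    have hwalk : ∀ m : ℕ, Relation.ReflTransGen (stp src tgt)
        (src (f ⟨1 % n, Nat.mod_lt _ hn⟩)) (src (f ⟨(1 + m) % n, Nat.mod_lt _ hn⟩)) := by
      intro m
      induction m with
      | zero => exact Relation.ReflTransGen.refl
      | succ k ihk => exact ihk.tail (by simpa [← Nat.add_assoc] using hstep (1 + k))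
    have hfin := hwalk (n - 1)
    have h1n : (1 + (n - 1)) % n = 0 := by
      have : 1 + (n - 1) = n := by omega
      rw [this, Nat.mod_self]
    rw [show (⟨(1 + (n - 1)) % n, Nat.mod_lt _ hn⟩ : Fin n) = ⟨0, hn⟩ from Fin.ext h1n] at hfin
    apply hWF (f ⟨0, hn⟩)
    have := hchain ⟨0, hn⟩
    rw [this]
    simpa using hfin

section contract

variable (src tgt : E → V) (H : Set E)

def conRel : V → V → Prop := fun u v => ∃ k, k ∉ H ∧ src k = u ∧ tgt k = v

def conSetoid : Setoid V := ⟨Relation.EqvGen (conRel src tgt H), Relation.EqvGen.is_equivalence _⟩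

def cmk : V → Quotient (conSetoid src tgt H) := Quotient.mk _

def cmap (σ : E → V) : ↥H → Quotient (conSetoid src tgt H) := fun f => cmk src tgt H (σ f.1)

variable {src tgt H}
variable {σ τ : E → V}

lemma cmk_eq (hid : ∀ k, k ∉ H → σ k = src k ∧ τ k = tgt k) {k : E} (hk : k ∉ H) :
    cmk src tgt H (σ k) = cmk src tgt H (τ k) := by
  rw [(hid k hk).1, (hid k hk).2]
  exact Quotient.sound (Relation.EqvGen.rel _ _ ⟨k, hk, rfl, rfl⟩)

lemma con_sat (hid : ∀ k, k ∉ H → σ k = src k ∧ τ k = tgt k) {S : Set V}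
    (hcl : Closed σ τ S) (hnoK : ∀ k, k ∉ H → k ∉ dirCutOf σ τ S) :
    ∀ u v, Relation.EqvGen (conRel src tgt H) u v → (u ∈ S ↔ v ∈ S) := by
  intro u v h
  induction h with
  | rel x y hr =>
    obtain ⟨k, hk, h1, h2⟩ := hr
    subst h1; subst h2
    rw [← (hid k hk).1, ← (hid k hk).2]
    constructor
    · intro hσ
      by_contra hτ
      exact hnoK k hk ⟨hσ, hτ⟩
    · exact hcl k
  | refl => exact Iff.rfl
  | symm _ _ _ ih => exact ih.symm
  | trans _ _ _ _ _ ih1 ih2 => exact ih1.trans ih2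

lemma con_mem_image {S : Set V} (hsat : ∀ u v, Relation.EqvGen (conRel src tgt H) u v → (u ∈ S ↔ v ∈ S)) (v : V) :
    cmk src tgt H v ∈ cmk src tgt H '' S ↔ v ∈ S := by
  constructor
  · rintro ⟨w, hw, he⟩
    exact (hsat w v (Quotient.exact he)).1 hw
  · intro h; exact ⟨v, h, rfl⟩

lemma con_push (hid : ∀ k, k ∉ H → σ k = src k ∧ τ k = tgt k) {S : Set V}
    (hcl : Closed σ τ S) (hnoK : ∀ k, k ∉ H → k ∉ dirCutOf σ τ S) :
    Closed (cmap src tgt H σ) (cmap src tgt H τ) (cmk src tgt H '' S) ∧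
      dirCutOf (cmap src tgt H σ) (cmap src tgt H τ) (cmk src tgt H '' S)
        = Subtype.val ⁻¹' dirCutOf σ τ S := by
  have hsat := con_sat hid hcl hnoK
  constructor
  · intro f hf
    have := (con_mem_image hsat (τ f.1)).1 hf
    exact (con_mem_image hsat (σ f.1)).2 (hcl f.1 this)
  · ext f
    simp only [dirCutOf, Set.mem_setOf_eq, Set.mem_preimage, cmap]
    rw [con_mem_image hsat (σ f.1), con_mem_image hsat (τ f.1)]

lemma con_pull (hid : ∀ k, k ∉ H → σ k = src k ∧ τ k = tgt k)
    {T : Set (Quotient (conSetoid src tgt H))}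
    (hT : Closed (cmap src tgt H σ) (cmap src tgt H τ) T) :
    Closed σ τ (cmk src tgt H ⁻¹' T) ∧
      dirCutOf σ τ (cmk src tgt H ⁻¹' T)
        = Subtype.val '' dirCutOf (cmap src tgt H σ) (cmap src tgt H τ) T := by
  constructor
  · intro e he
    by_cases heH : e ∈ H
    · exact hT ⟨e, heH⟩ he
    · have := cmk_eq hid heH
      simp only [Set.mem_preimage] at he ⊢
      rw [this]; exact he
  · ext e
    constructor
    · rintro ⟨h1, h2⟩
      by_cases heH : e ∈ H
      · exact ⟨⟨e, heH⟩, ⟨h1, h2⟩, rfl⟩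
      · refine absurd ?_ h2
        show cmk src tgt H (τ e) ∈ T
        rw [← cmk_eq hid heH]
        exact h1
    · rintro ⟨f, ⟨h1, h2⟩, rfl⟩
      exact ⟨h1, h2⟩

lemma con_cutIn (hid : ∀ k, k ∉ H → σ k = src k ∧ τ k = tgt k) {U : Set E}
    (hC2 : ∀ S', Closed σ τ S' → dirCutOf σ τ S' ⊆ U → dirCutOf σ τ S' ⊆ H) :
    CutIn σ τ U = Subtype.val '' CutIn (cmap src tgt H σ) (cmap src tgt H τ)
      (Subtype.val ⁻¹' U) := by
  ext e
  constructor
  · rintro ⟨D, hD, heD, hDU⟩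
    obtain ⟨S', hcl, rfl, hne⟩ := isDirCut_iff.mp hD
    have hDH : dirCutOf σ τ S' ⊆ H := hC2 S' hcl hDU
    have hnoK : ∀ k, k ∉ H → k ∉ dirCutOf σ τ S' := fun k hk hkD => hk (hDH hkD)
    obtain ⟨hclc, hcut⟩ := con_push hid hcl hnoK
    have heH : e ∈ H := hDH heD
    refine ⟨⟨e, heH⟩, ⟨_, isDirCut_iff.mpr ⟨_, hclc, rfl, ⟨⟨e, heH⟩, ?_⟩⟩, ?_, ?_⟩, rfl⟩
    · rw [hcut]; exact heD
    · rw [hcut]; exact heD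
    · rw [hcut]; intro f hf; exact hDU hf
  · rintro ⟨f, ⟨D', hD', hfD', hD'U⟩, rfl⟩
    obtain ⟨T, hclT, rfl, hne'⟩ := isDirCut_iff.mp hD'
    obtain ⟨hcl2, hcut2⟩ := con_pull hid hclT
    refine ⟨_, isDirCut_iff.mpr ⟨_, hcl2, rfl, ?_⟩, ?_, ?_⟩
    · rw [hcut2]; exact ⟨f.1, ⟨f, hfD', rfl⟩⟩
    · rw [hcut2]; exact ⟨f, hfD', rfl⟩
    · rw [hcut2]
      rintro x ⟨g, hg, rfl⟩
      exact hD'U hg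

lemma con_walkFree (hH : H ⊆ CutIn src tgt H) (hWF : WalkFree src tgt) :
    WalkFree (cmap src tgt H src) (cmap src tgt H tgt) := by
  intro f hrtg
  have hid : ∀ k, k ∉ H → src k = src k ∧ tgt k = tgt k := fun k _ => ⟨rfl, rfl⟩
  obtain ⟨D, hD, hfD, hDH⟩ := hH f.2
  obtain ⟨S₀, hcl, rfl, hne⟩ := isDirCut_iff.mp hD
  have hnoK : ∀ k, k ∉ H → k ∉ dirCutOf src tgt S₀ := fun k hk hkD => hk (hDH hkD)
  obtain ⟨hclc, hcut⟩ := con_push hid hcl hnoK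
  have hf : f ∈ dirCutOf (cmap src tgt H src) (cmap src tgt H tgt) (cmk src tgt H '' S₀) := by
    rw [hcut]; exact hfD
  exact hf.2 (closed_rtg hclc hrtg hf.1)

end contract

def partUnion [LinearOrder E] (src tgt : E → V) (S : Set E) : Set E := ⋃ a ∈ S, part src tgt a

/-! ### swap (total reversal) -/

lemma dirCutOf_swap {src tgt : E → V} (S : Set V) :
    dirCutOf tgt src S = dirCutOf src tgt Sᶜ := by
  ext e
  simp only [dirCutOf, Set.mem_setOf_eq, Set.mem_compl_iff, not_not]
  tauto

lemma isDirCut_swap_mp {src tgt : E → V} {D : Set E} (h : IsDirCut tgt src D) :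
    IsDirCut src tgt D := by
  obtain ⟨S, h1, h2, h3⟩ := h
  refine ⟨Sᶜ, h1.trans (dirCutOf_swap S), ?_, h3⟩
  rw [dirCutOf_swap (src := src) (tgt := tgt) Sᶜ, compl_compl]
  exact h2

lemma isDirCut_swap {src tgt : E → V} {D : Set E} :
    IsDirCut tgt src D ↔ IsDirCut src tgt D :=
  ⟨isDirCut_swap_mp, isDirCut_swap_mp⟩

lemma cutIn_swap {src tgt : E → V} (U : Set E) : CutIn tgt src U = CutIn src tgt U := by
  ext e
  exact exists_congr fun D => and_congr_left fun _ => isDirCut_swap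

lemma cutActive_swap [LinearOrder E] {src tgt : E → V} :
    cutActive tgt src = cutActive src tgt := by
  ext a; simp only [cutActive, Set.mem_setOf_eq, cutIn_swap]

lemma part_swap [LinearOrder E] {src tgt : E → V} (a : E) :
    part tgt src a = part src tgt a := by
  simp only [part, cutIn_swap]

lemma partUnion_swap [LinearOrder E] {src tgt : E → V} (S : Set E) :
    partUnion tgt src S = partUnion src tgt S := by
  unfold partUnion
  exact Set.iUnion₂_congr fun a _ => part_swap a

lemma rtg_swap {src tgt : E → V} {a b : V}
    (h : Relation.ReflTransGen (stp tgt src) a b) :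
    Relation.ReflTransGen (stp src tgt) b a := by
  induction h with
  | refl => exact Relation.ReflTransGen.refl
  | tail _ hstep ih =>
    obtain ⟨e, he1, he2⟩ := hstep
    exact Relation.ReflTransGen.head ⟨e, he2, he1⟩ ih

lemma walkFree_swap {src tgt : E → V} (h : WalkFree src tgt) : WalkFree tgt src :=
  fun e hrtg => h e (rtg_swap hrtg)

lemma reorient_compl {src tgt : E → V} (A : Set E) :
    reorientSrc tgt src Aᶜ = reorientSrc src tgt A := by
  funext e
  by_cases he : e ∈ A <;> simp [reorientSrc, he]

/-! ### the walk characterisation of the lowest part -/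

section lowpart
variable [LinearOrder E] {sg tg : E → V} {a₁ : E}

def stp1 (sg tg : E → V) (a₁ : E) (u v : V) : Prop :=
  stp sg tg u v ∨ (tg a₁ = u ∧ sg a₁ = v)

lemma M1 (hbot : ∀ f, a₁ ≤ f) {x : E} (hx : x ∉ CutIn sg tg (Set.Ioi a₁)) :
    Relation.ReflTransGen (stp1 sg tg a₁) (tg x) (sg x) := by
  by_contra hw
  set U : Set V := {v | Relation.ReflTransGen (stp1 sg tg a₁) v (sg x)} with hU
  have hcl : Closed sg tg U := by
    intro e he
    exact Relation.ReflTransGen.head (Or.inl ⟨e, rfl, rfl⟩) he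
  have ha : sg a₁ ∈ U → tg a₁ ∈ U := by
    intro h
    exact Relation.ReflTransGen.head (Or.inr ⟨rfl, rfl⟩) h
  have hxc : x ∈ dirCutOf sg tg U := ⟨Relation.ReflTransGen.refl, hw⟩
  refine hx ⟨dirCutOf sg tg U, isDirCut_iff.mpr ⟨U, hcl, rfl, ⟨x, hxc⟩⟩, hxc, ?_⟩
  rintro g ⟨hg1, hg2⟩
  refine lt_of_le_of_ne (hbot g) fun h => ?_
  subst h
  exact hg2 (ha hg1)

lemma M2 {x : E} (hw : Relation.ReflTransGen (stp1 sg tg a₁) (tg x) (sg x))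
    (hx : x ∈ CutIn sg tg (Set.Ioi a₁)) : False := by
  obtain ⟨D, hD, hxD, hDU⟩ := hx
  obtain ⟨S, hcl, rfl, -⟩ := isDirCut_iff.mp hD
  obtain ⟨u, v, hstep, hu, hv, -, -⟩ := rtg_enter hw hxD.2 hxD.1
  rcases hstep with ⟨g, hg1, hg2⟩ | ⟨h1, h2⟩
  · exact hu (hg1 ▸ hcl g (hg2 ▸ hv))
  · exact lt_irrefl a₁ (hDU ⟨h2 ▸ hv, h1 ▸ hu⟩)

end lowpart

/-! ### partition facts -/

section partition
variable [Fintype E] [LinearOrder E] {sg tg : E → V}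

lemma part_disjoint {a b : E} (hab : a ≠ b) {e : E} (ha : e ∈ part sg tg a)
    (hb : e ∈ part sg tg b) : False := by
  rcases lt_or_gt_of_ne hab with h | h
  · exact ha.2 (CutIn_mono (fun x (hx : b ≤ x) => lt_of_lt_of_le h hx) hb.1)
  · exact hb.2 (CutIn_mono (fun x (hx : a ≤ x) => lt_of_lt_of_le h hx) ha.1)

lemma part_cover (hWF : WalkFree sg tg) {a₁ : E} (hbot : ∀ f, a₁ ≤ f) (e : E) :
    ∃ a, a ∈ cutActive sg tg ∧ e ∈ part sg tg a := by
  classical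
  set B : Set E := {b | e ∈ CutIn sg tg (Set.Ici b)} with hB
  have ha₁B : a₁ ∈ B := by
    obtain ⟨D, hD, heD, -⟩ := mem_cutIn_univ hWF e
    exact ⟨D, hD, heD, fun x _ => hbot x⟩
  obtain ⟨m, hmB, hmax⟩ := Set.exists_max_image B id (Set.toFinite B) ⟨a₁, ha₁B⟩
  have hnotIoi : e ∉ CutIn sg tg (Set.Ioi m) := by
    rintro ⟨D, hD, heD, hDU⟩
    have hfin : D.Finite := Set.toFinite D
    obtain ⟨m', hm'D, hmin⟩ := Set.exists_min_image D id hfin ⟨e, heD⟩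
    have hm'B : m' ∈ B := ⟨D, hD, heD, fun x hx => hmin x hx⟩
    exact absurd (hmax m' hm'B) (not_le.mpr (hDU hm'D))
  obtain ⟨D, hD, heD, hDU⟩ := hmB
  have hmB' : m ∈ B := ⟨D, hD, heD, hDU⟩
  have hfin : D.Finite := Set.toFinite D
  obtain ⟨m'', hm''D, hmin⟩ := Set.exists_min_image D id hfin ⟨e, heD⟩
  have hm''B : m'' ∈ B := ⟨D, hD, heD, fun x hx => hmin x hx⟩
  have hm''m : m'' = m := le_antisymm (hmax m'' hm''B) (hDU hm''D)
  exact ⟨m, ⟨D, hD, hm''m ▸ hm''D, fun x hx => hm''m ▸ hmin x hx⟩, hmB', hnotIoi⟩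

lemma partUnion_compl (hWF : WalkFree sg tg) {a₁ : E} (hbot : ∀ f, a₁ ≤ f)
    {S : Set E} (hS : S ⊆ cutActive sg tg) :
    partUnion sg tg (cutActive sg tg \ S) = (partUnion sg tg S)ᶜ := by
  have hmem : ∀ (X : Set E) (x : E), x ∈ partUnion sg tg X ↔ ∃ a, a ∈ X ∧ x ∈ part sg tg a := by
    intro X x; simp [partUnion]
  ext e
  rw [hmem, Set.mem_compl_iff, hmem]
  constructor
  · rintro ⟨a, haAS, hpa⟩ hcon
    obtain ⟨b, hbS, hpb⟩ := hcon
    rcases eq_or_ne a b with rfl | hab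
    · exact haAS.2 hbS
    · exact part_disjoint hab hpa hpb
  · intro h
    obtain ⟨a, haA, hpa⟩ := part_cover hWF hbot e
    exact ⟨a, ⟨haA, fun haS => h ⟨a, haS, hpa⟩⟩, hpa⟩

end partition

lemma mem_partUnion [LinearOrder E] {sg tg : E → V} {X : Set E} {x : E} :
    x ∈ partUnion sg tg X ↔ ∃ a, a ∈ X ∧ x ∈ part sg tg a := by
  simp [partUnion]

end AB
namespace AB

universe u v

def MainProp (n : ℕ) : Prop := ∀ {V : Type u} {E : Type v} [Fintype E] [LinearOrder E]
    (src tgt : E → V), Fintype.card E = n → WalkFree src tgt →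
    ∀ S : Set E, S ⊆ cutActive src tgt →
      WalkFree (reorientSrc src tgt (partUnion src tgt S))
          (reorientSrc tgt src (partUnion src tgt S)) ∧
        ∀ U : Set E, (∀ x y, x ∈ U → x ≤ y → y ∈ U) →
          CutIn (reorientSrc src tgt (partUnion src tgt S))
              (reorientSrc tgt src (partUnion src tgt S)) U = CutIn src tgt U

theorem main_lemma : ∀ n, MainProp.{u,v} n := by
  intro n
  induction n using Nat.strong_induction_on with
  | _ n IH =>
  intro V E instF instL src tgt hcard hWF S hS
  by_cases hE : Nonempty E
  case neg =>
    have hem : IsEmpty E := not_nonempty_iff.mp hE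
    constructor
    · intro e; exact (hem.false e).elim
    · intro U _; ext e; exact (hem.false e).elim
  case pos =>
  haveI := hE
  set a₁ : E := Finset.univ.min' Finset.univ_nonempty with ha₁def
  have hbot : ∀ f : E, a₁ ≤ f := fun f => Finset.min'_le _ _ (Finset.mem_univ f)
  -- the core argument, assuming `a₁ ∉ S₀`
  have core : ∀ (sg tg : E → V), WalkFree sg tg → ∀ S₀ : Set E, S₀ ⊆ cutActive sg tg →
      a₁ ∉ S₀ →
      WalkFree (reorientSrc sg tg (partUnion sg tg S₀))
          (reorientSrc tg sg (partUnion sg tg S₀)) ∧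
        ∀ U : Set E, (∀ x y, x ∈ U → x ≤ y → y ∈ U) →
          CutIn (reorientSrc sg tg (partUnion sg tg S₀))
              (reorientSrc tg sg (partUnion sg tg S₀)) U = CutIn sg tg U := by
    intro sg tg hWF0 S₀ hS₀ ha₁S₀
    set A := partUnion sg tg S₀ with hA
    set sg' := reorientSrc sg tg A with hsg'
    set tg' := reorientSrc tg sg A with htg'
    set H := CutIn sg tg (Set.Ioi a₁) with hH
    have hSH : ∀ a ∈ S₀, a₁ < a := fun a ha =>
      lt_of_le_of_ne (hbot a) (fun h => ha₁S₀ (h ▸ ha))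
    have hSinH : ∀ a ∈ S₀, a ∈ H := by
      intro a ha
      obtain ⟨D, hD, haD, hDU⟩ := hS₀ ha
      exact ⟨D, hD, haD, fun x hx => lt_of_lt_of_le (hSH a ha) (hDU hx)⟩
    have hHgt : ∀ x ∈ H, a₁ < x := by
      rintro x ⟨D, hD, hxD, hDU⟩; exact hDU hxD
    have hAH : A ⊆ H := by
      intro e he
      obtain ⟨a, ha, hpa⟩ := mem_partUnion.mp he
      exact CutIn_mono (fun x (hx : a ≤ x) => lt_of_lt_of_le (hSH a ha) hx) hpa.1
    have ha₁H : a₁ ∉ H := fun h => lt_irrefl a₁ (hHgt a₁ h)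
    have hHH : H ⊆ CutIn sg tg H := by
      rintro e ⟨D, hD, heD, hDU⟩
      exact ⟨D, hD, heD, fun d hd => ⟨D, hD, hd, hDU⟩⟩
    have hAnotH : ∀ k, k ∉ H → k ∉ A := fun k hk hA' => hk (hAH hA')
    have hreor : ∀ k, k ∉ A → sg' k = sg k ∧ tg' k = tg k := by
      intro k hk
      constructor <;> simp [hsg', htg', reorientSrc, hk]
    have hreorA : ∀ k, k ∈ A → sg' k = tg k ∧ tg' k = sg k := by
      intro k hk
      constructor <;> simp [hsg', htg', reorientSrc, hk]
    have hid0 : ∀ k, k ∉ H → sg k = sg k ∧ tg k = tg k := fun k _ => ⟨rfl, rfl⟩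
    have hid' : ∀ k, k ∉ H → sg' k = sg k ∧ tg' k = tg k := fun k hk => hreor k (hAnotH k hk)
    have hcardH : Fintype.card ↥H < n := by
      rw [← hcard]
      exact Fintype.card_subtype_lt (x := a₁) ha₁H
    -- the contracted graph
    set sgc := cmap sg tg H sg with hsgc
    set tgc := cmap sg tg H tg with htgc
    have hWFc : WalkFree sgc tgc := con_walkFree hHH hWF0
    have hbase : ∀ {U : Set E}, U ⊆ Set.Ioi a₁ →
        CutIn sg tg U = Subtype.val '' CutIn sgc tgc (Subtype.val ⁻¹' U) := by
      intro U hU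
      refine con_cutIn hid0 ?_
      intro S' hcl hsub d hd
      exact ⟨dirCutOf sg tg S', isDirCut_iff.mpr ⟨S', hcl, rfl, ⟨d, hd⟩⟩, hd,
        fun x hx => hU (hsub hx)⟩
    have hbase' : ∀ {U : Set E}, U ⊆ Set.Ioi a₁ →
        CutIn sgc tgc (Subtype.val ⁻¹' U) = Subtype.val ⁻¹' CutIn sg tg U := by
      intro U hU
      rw [hbase hU, Set.preimage_image_eq _ Subtype.val_injective]
    have hIci : ∀ (x : E) (hx : x ∈ H), (Subtype.val ⁻¹' Set.Ici x : Set ↥H) = Set.Ici ⟨x, hx⟩ := by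
      intro x hx
      ext f
      simp [Set.mem_preimage, Set.mem_Ici, Subtype.coe_le_coe, ← Subtype.coe_le_coe]
    have hIoi : ∀ (x : E) (hx : x ∈ H), (Subtype.val ⁻¹' Set.Ioi x : Set ↥H) = Set.Ioi ⟨x, hx⟩ := by
      intro x hx
      ext f
      simp [Set.mem_preimage, Set.mem_Ioi, ← Subtype.coe_lt_coe]
    have hSh : (Subtype.val ⁻¹' S₀ : Set ↥H) ⊆ cutActive sgc tgc := by
      rintro ⟨x, hxH⟩ hxS
      have hx : x ∈ CutIn sg tg (Set.Ici x) := hS₀ hxS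
      have hU : Set.Ici x ⊆ Set.Ioi a₁ := fun y hy => lt_of_lt_of_le (hSH x hxS) hy
      have hx' : (⟨x, hxH⟩ : ↥H) ∈ CutIn sgc tgc (Subtype.val ⁻¹' Set.Ici x) := by
        rw [hbase' hU]
        exact hx
      rwa [hIci x hxH] at hx'
    have hpart : ∀ (x : E) (hx : x ∈ H),
        part sgc tgc ⟨x, hx⟩ = Subtype.val ⁻¹' part sg tg x := by
      intro x hx
      have h1 : Set.Ici x ⊆ Set.Ioi a₁ := fun y hy => lt_of_lt_of_le (hHgt x hx) hy
      have h2 : Set.Ioi x ⊆ Set.Ioi a₁ := fun y hy => lt_of_lt_of_le (hHgt x hx) (le_of_lt hy)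
      unfold part
      rw [← hIci x hx, ← hIoi x hx, hbase' h1, hbase' h2, Set.preimage_diff]
    have hAh : partUnion sgc tgc (Subtype.val ⁻¹' S₀) = Subtype.val ⁻¹' A := by
      ext f
      rw [mem_partUnion]
      constructor
      · rintro ⟨a', ha', hf⟩
        rw [show a' = ⟨a'.1, a'.2⟩ from rfl, hpart a'.1 a'.2] at hf
        exact mem_partUnion.mpr ⟨a'.1, ha', hf⟩
      · intro hf
        obtain ⟨a, ha, hpa⟩ := mem_partUnion.mp hf
        exact ⟨⟨a, hSinH a ha⟩, ha, by rw [hpart a (hSinH a ha)]; exact hpa⟩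
    obtain ⟨hWFc', hCutc'⟩ := IH (Fintype.card ↥H) hcardH sgc tgc rfl hWFc
      (Subtype.val ⁻¹' S₀) hSh
    rw [hAh] at hWFc' hCutc'
    set sgc' := reorientSrc sgc tgc (Subtype.val ⁻¹' A) with hsgc'
    set tgc' := reorientSrc tgc sgc (Subtype.val ⁻¹' A) with htgc'
    have hfun1 : sgc' = cmap sg tg H sg' := by
      funext f
      by_cases hf : f.1 ∈ A
      · have hf' : f ∈ (Subtype.val ⁻¹' A : Set ↥H) := hf
        simp [hsgc', reorientSrc, hf', htgc, cmap, (hreorA f.1 hf).1]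
      · have hf' : f ∉ (Subtype.val ⁻¹' A : Set ↥H) := hf
        simp [hsgc', reorientSrc, hf', hsgc, cmap, (hreor f.1 hf).1]
    have hfun2 : tgc' = cmap sg tg H tg' := by
      funext f
      by_cases hf : f.1 ∈ A
      · have hf' : f ∈ (Subtype.val ⁻¹' A : Set ↥H) := hf
        simp [htgc', reorientSrc, hf', hsgc, cmap, (hreorA f.1 hf).2]
      · have hf' : f ∉ (Subtype.val ⁻¹' A : Set ↥H) := hf
        simp [htgc', reorientSrc, hf', htgc, cmap, (hreor f.1 hf).2]
    have hproj : ∀ u v, Relation.ReflTransGen (stp sg' tg') u v →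
        Relation.ReflTransGen (stp sgc' tgc') (cmk sg tg H u) (cmk sg tg H v) := by
      intro u v h
      induction h with
      | refl => exact Relation.ReflTransGen.refl
      | @tail b c hub hstep ih =>
        obtain ⟨g, hg1, hg2⟩ := hstep
        subst hg1; subst hg2
        by_cases hgH : g ∈ H
        · refine ih.tail ?_
          refine ⟨⟨g, hgH⟩, ?_, ?_⟩
          · rw [hfun1]; rfl
          · rw [hfun2]; rfl
        · rw [← cmk_eq hid' hgH]
          exact ih
    have hdich : ∀ u v, Relation.ReflTransGen (stp sg' tg') u v →
        Relation.ReflTransGen (stp sg tg) u v ∨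
        ∃ g, g ∈ H ∧ Relation.ReflTransGen (stp sg' tg') u (sg' g) ∧
          Relation.ReflTransGen (stp sg' tg') (tg' g) v := by
      intro u v h
      induction h with
      | refl => exact Or.inl Relation.ReflTransGen.refl
      | @tail b c hub hstep ih =>
        obtain ⟨g, hg1, hg2⟩ := hstep
        by_cases hgH : g ∈ H
        · exact Or.inr ⟨g, hgH, hg1 ▸ hub, hg2 ▸ Relation.ReflTransGen.refl⟩
        · have hgA := hAnotH g hgH
          rcases ih with hl | ⟨g₀, hg₀H, h1, h2⟩
          · exact Or.inl (hl.tail ⟨g, (hreor g hgA).1.symm.trans hg1,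
              (hreor g hgA).2.symm.trans hg2⟩)
          · exact Or.inr ⟨g₀, hg₀H, h1, h2.tail ⟨g, hg1, hg2⟩⟩
    have hWF' : WalkFree sg' tg' := by
      intro e h
      by_cases heH : e ∈ H
      · have hp := hproj _ _ h
        rw [hfun1, hfun2] at hp
        refine hWFc' ⟨e, heH⟩ ?_
        rw [hfun1, hfun2]
        exact hp
      · have heA := hAnotH e heH
        rw [(hreor e heA).1, (hreor e heA).2] at h
        rcases hdich _ _ h with hl | ⟨g, hgH, h1, h2⟩
        · exact hWF0 e hl
        · have hp1 := hproj _ _ h1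
          have hp2 := hproj _ _ h2
          have hee : cmk sg tg H (sg e) = cmk sg tg H (tg e) := cmk_eq hid0 heH
          have hp1' : Relation.ReflTransGen (stp sgc' tgc')
              (cmk sg tg H (sg e)) (cmk sg tg H (sg' g)) := by
            rw [hee]; exact hp1
          have hfin := hp2.trans hp1'
          rw [hfun1, hfun2] at hfin
          refine hWFc' ⟨g, hgH⟩ ?_
          rw [hfun1, hfun2]
          exact hfin
    have hC2' : ∀ T, Closed sg' tg' T → dirCutOf sg' tg' T ⊆ Set.Ioi a₁ →
        dirCutOf sg' tg' T ⊆ H := by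
      intro T hclT hsub k hk
      by_contra hkH
      have hkA := hAnotH k hkH
      have hk1 : sg k ∈ T := by rw [← (hreor k hkA).1]; exact hk.1
      have hk2 : tg k ∉ T := by rw [← (hreor k hkA).2]; exact hk.2
      have hwalk : Relation.ReflTransGen (stp1 sg tg a₁) (tg k) (sg k) := M1 hbot hkH
      obtain ⟨u, v, hstep, hu, hv, h1, h2⟩ := rtg_enter hwalk hk2 hk1
      rcases hstep with ⟨g, hg1, hg2⟩ | ⟨hh1, hh2⟩
      · by_cases hgA : g ∈ A
        · have hgH : g ∈ H := hAH hgA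
          have hw2 : Relation.ReflTransGen (stp1 sg tg a₁) (tg g) (sg g) := by
            rw [hg1, hg2]
            exact (h2.tail (Or.inl ⟨k, rfl, rfl⟩)).trans h1
          exact M2 hw2 hgH
        · have := hclT g (by rw [(hreor g hgA).2, hg2]; exact hv)
          rw [(hreor g hgA).1, hg1] at this
          exact hu this
      · have ha₁A := hAnotH a₁ ha₁H
        have ha₁cut : a₁ ∈ dirCutOf sg' tg' T := by
          constructor
          · rw [(hreor a₁ ha₁A).1, hh2]; exact hv
          · rw [(hreor a₁ ha₁A).2, hh1]; exact hu
        exact lt_irrefl a₁ (hsub ha₁cut)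
    have hbase2 : ∀ {U : Set E}, U ⊆ Set.Ioi a₁ →
        CutIn sg' tg' U
          = Subtype.val '' CutIn (cmap sg tg H sg') (cmap sg tg H tg') (Subtype.val ⁻¹' U) := by
      intro U hU
      refine con_cutIn hid' ?_
      intro S' hcl hsub
      exact hC2' S' hcl (hsub.trans hU)
    refine ⟨hWF', ?_⟩
    intro U hup
    by_cases haU : a₁ ∈ U
    · have hUuniv : U = Set.univ := Set.eq_univ_of_forall fun x => hup a₁ x haU (hbot x)
      subst hUuniv
      rw [Set.eq_univ_of_forall (mem_cutIn_univ hWF'),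
        Set.eq_univ_of_forall (mem_cutIn_univ hWF0)]
    · have hUIoi : U ⊆ Set.Ioi a₁ := fun x hx => lt_of_le_of_ne (hbot x) (fun h => haU (h ▸ hx))
      rw [hbase2 hUIoi, hbase hUIoi, ← hfun1, ← hfun2]
      exact congrArg (Set.image Subtype.val)
        (hCutc' (Subtype.val ⁻¹' U) (fun x y hx hxy => hup x.1 y.1 hx (Subtype.coe_le_coe.2 hxy)))
  -- finish: complement trick if a₁ ∈ S
  by_cases ha : a₁ ∈ S
  · have hWFr := walkFree_swap hWF
    set S₂ := cutActive src tgt \ S with hS₂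
    have hS₂sub : S₂ ⊆ cutActive tgt src := by
      rw [cutActive_swap]; exact fun a ha' => ha'.1
    have ha₁S₂ : a₁ ∉ S₂ := fun h => h.2 ha
    obtain ⟨hW, hC⟩ := core tgt src hWFr S₂ hS₂sub ha₁S₂
    have hAc : partUnion tgt src S₂ = (partUnion src tgt S)ᶜ := by
      rw [partUnion_swap]
      exact partUnion_compl hWF hbot hS
    rw [hAc, reorient_compl (partUnion src tgt S),
      reorient_compl (src := tgt) (tgt := src) (partUnion src tgt S)] at hW hC
    refine ⟨hW, fun U hU => ?_⟩
    rw [hC U hU, cutIn_swap]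
  · exact core src tgt hWF S hS ha

end AB
/-- Let `G` be a finite acyclic directed graph with linearly ordered
edges. Reversing the edges of any union of parts of the active partition of `G` yields an
acyclic orientation with the same set of dual-active edges `O*(G)`; in particular all
`2^ι` such orientations (`ι = |O*(G)|`) are acyclic with dual-active set `O*(G)`. -/
theorem stmt_14 {V E : Type*} [Fintype V] [Fintype E] [LinearOrder E]
    (src tgt : E → V) (hacyc : AB.Acyclic src tgt)
    (ι : ℕ) (hι : ι = (AB.dualActive src tgt).ncard)
    (S : Set E) (hS : S ⊆ AB.dualActive src tgt)
    (A : Set E) (hA : A = ⋃ a ∈ S, AB.activePart src tgt a) :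
    AB.Acyclic (AB.reorientSrc src tgt A) (AB.reorientSrc tgt src A) ∧
      AB.dualActive (AB.reorientSrc src tgt A) (AB.reorientSrc tgt src A)
        = AB.dualActive src tgt := by
  have hWF : AB.WalkFree src tgt := AB.acyclic_iff_walkFree.mp hacyc
  have hS' : S ⊆ AB.cutActive src tgt := by
    rw [← AB.dualActive_eq_cutActive]; exact hS
  have hA' : A = AB.partUnion src tgt S := by
    rw [hA]
    exact Set.iUnion₂_congr fun a _ => AB.activePart_eq_part src tgt a
  obtain ⟨hW, hC⟩ := AB.main_lemma (Fintype.card E) src tgt rfl hWF S hS'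
  constructor
  · rw [AB.acyclic_iff_walkFree, hA']
    exact hW
  · rw [hA', AB.dualActive_eq_cutActive, AB.dualActive_eq_cutActive]
    ext a
    simp only [AB.cutActive, Set.mem_setOf_eq]
    rw [hC (Set.Ici a) (fun x y hx hxy => le_trans hx hxy)]
end

section
/- Let M be a matroid on a finite set E with |E| > 1. Then β(M) = β(M*), where β(M) is Crapo's beta invariant. -/
namespace AB
/-- Crapo's beta invariant: `β(M) = (-1)^{r(M)} Σ_{A ⊆ E} (-1)^{|A|} r(A)`. -/
noncomputable def beta {α : Type*} [Fintype α] (M : Matroid α) : ℤ :=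
  (-1) ^ (rank M M.E) *
    ∑ A ∈ (Finset.univ : Finset α).powerset, (-1) ^ A.card * (rank M ↑A : ℤ)
end AB


open Set

namespace ABproof

variable {α : Type*} {M : Matroid α} {I J X : Set α}

/-- An independent subset of `X` has at most the cardinality of a basis of `X`. -/
lemma ncard_le_of_basis [Fintype α] (hI : M.IsBasis I X) (hJ : M.Indep J) (hJX : J ⊆ X) :
    J.ncard ≤ I.ncard := by
  obtain ⟨I', hJI', hI'⟩ := hJ.subset_isBasis_of_subset hJX hI.subset_ground
  have h1 : J.ncard ≤ I'.ncard := Set.ncard_le_ncard hI' (Set.toFinite _)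
  have h2 : I'.ncard = I.ncard :=
    (hJI'.restrict_isBase).ncard_eq_ncard_of_isBase (hI.restrict_isBase)
  omega

lemma rank_eq_ncard_of_basis [Fintype α] (hI : M.IsBasis I X) :
    AB.rank M X = I.ncard := by
  have hmem : I.ncard ∈ {n : ℕ | ∃ J, J ⊆ X ∧ M.Indep J ∧ J.ncard = n} :=
    ⟨I, hI.subset, hI.indep, rfl⟩
  have hbd : ∀ n ∈ {n : ℕ | ∃ J, J ⊆ X ∧ M.Indep J ∧ J.ncard = n}, n ≤ I.ncard := by
    rintro n ⟨J, hJX, hJ, rfl⟩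
    exact ncard_le_of_basis hI hJ hJX
  exact le_antisymm (csSup_le ⟨_, hmem⟩ hbd) (le_csSup ⟨I.ncard, hbd⟩ hmem)

lemma rank_empty (M : Matroid α) [Fintype α] : AB.rank M ∅ = 0 := by
  have := rank_eq_ncard_of_basis (M.empty_indep.isBasis_self)
  simpa using this

/-- The dual rank formula, in subtraction-free form. -/
lemma dual_rank_formula [Fintype α] (hE : M.E = univ) (X : Set α) :
    AB.rank M✶ X + AB.rank M univ = X.ncard + AB.rank M (univ \ X) := by
  obtain ⟨J, hJ⟩ := M.exists_isBasis (univ \ X) (by rw [hE]; exact subset_univ _)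
  obtain ⟨B, hB, hJB⟩ := hJ.indep.exists_isBase_superset
  have hBJ : J = B \ X := by
    have h1 : B \ X ⊆ univ \ X := diff_subset_diff_left (subset_univ _)
    have := hJ.eq_of_subset_indep (hB.indep.subset diff_subset)
      (subset_diff.2 ⟨hJB, disjoint_sdiff_left.mono_left hJ.subset⟩) h1
    exact this
  -- rank M univ = |B|
  have hrB : AB.rank M univ = B.ncard := by
    have := rank_eq_ncard_of_basis hB.isBasis_ground
    rwa [hE] at this
  have hrJ : AB.rank M (univ \ X) = J.ncard := rank_eq_ncard_of_basis hJ
  -- rank M✶ X = |X \ B|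
  have hindep : M✶.Indep (X \ B) := by
    rw [Matroid.dual_indep_iff_exists (by rw [hE]; exact subset_univ _)]
    exact ⟨B, hB, disjoint_sdiff_left⟩
  have hbd : ∀ n ∈ {n : ℕ | ∃ I, I ⊆ X ∧ M✶.Indep I ∧ I.ncard = n}, n ≤ (X \ B).ncard := by
    rintro n ⟨I, hIX, hI, rfl⟩
    obtain ⟨B', hB', hdisj⟩ := (Matroid.dual_indep_iff_exists
      (show I ⊆ M.E by rw [hE]; exact subset_univ _)).1 hI
    have e1 : (B' ∩ (univ \ X)).ncard ≤ J.ncard :=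
      ncard_le_of_basis hJ (hB'.indep.subset inter_subset_left) inter_subset_right
    have e2 : I.ncard + (B' ∩ X).ncard ≤ X.ncard := by
      rw [← Set.ncard_union_eq (disjoint_of_subset_right inter_subset_left hdisj)
        (Set.toFinite _) (Set.toFinite _)]
      exact Set.ncard_le_ncard (union_subset hIX inter_subset_right) (Set.toFinite _)
    have e3 : (B' ∩ X).ncard + (B' \ X).ncard = B'.ncard :=
      Set.ncard_inter_add_ncard_diff_eq_ncard B' X (Set.toFinite _)
    have e3' : B' ∩ (univ \ X) = B' \ X := by
      ext x; simp [mem_diff]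
    have e4 : (X ∩ B).ncard + (X \ B).ncard = X.ncard :=
      Set.ncard_inter_add_ncard_diff_eq_ncard X B (Set.toFinite _)
    have e5 : (B ∩ X).ncard + (B \ X).ncard = B.ncard :=
      Set.ncard_inter_add_ncard_diff_eq_ncard B X (Set.toFinite _)
    have e6 : B'.ncard = B.ncard := hB'.ncard_eq_ncard_of_isBase hB
    have e7 : (X ∩ B).ncard = (B ∩ X).ncard := by rw [inter_comm]
    rw [e3'] at e1
    rw [hBJ] at e1
    omega
  have hmem : (X \ B).ncard ∈ {n : ℕ | ∃ I, I ⊆ X ∧ M✶.Indep I ∧ I.ncard = n} :=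
    ⟨X \ B, diff_subset, hindep, rfl⟩
  have hrX : AB.rank M✶ X = (X \ B).ncard :=
    le_antisymm (csSup_le ⟨_, hmem⟩ hbd) (le_csSup ⟨(X \ B).ncard, hbd⟩ hmem)
  -- final arithmetic
  have e4 : (X ∩ B).ncard + (X \ B).ncard = X.ncard :=
    Set.ncard_inter_add_ncard_diff_eq_ncard X B (Set.toFinite _)
  have e5 : (B ∩ X).ncard + (B \ X).ncard = B.ncard :=
    Set.ncard_inter_add_ncard_diff_eq_ncard B X (Set.toFinite _)
  have e7 : (X ∩ B).ncard = (B ∩ X).ncard := by rw [inter_comm]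
  rw [hrX, hrB, hrJ, hBJ]
  omega

end ABproof
open Set Finset in
lemma ABproof.sum_neg_one_pow_mul_card {α : Type*} [Fintype α] (h : 1 < Fintype.card α) :
    ∑ A ∈ (Finset.univ : Finset α).powerset, (-1 : ℤ) ^ A.card * (A.card : ℤ) = 0 := by
  obtain ⟨m, hm⟩ : ∃ m, Fintype.card α = m + 1 :=
    ⟨Fintype.card α - 1, by omega⟩
  have hm0 : m ≠ 0 := by omega
  have key := Finset.sum_powerset_apply_card (fun k => (-1 : ℤ) ^ k * (k : ℤ))
    (x := (Finset.univ : Finset α))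
  rw [key, Finset.card_univ, hm]
  rw [Finset.sum_range_succ']
  have step : ∀ i, ((m+1).choose (i+1)) • ((-1:ℤ)^(i+1) * ((i:ℤ)+1)) =
      -((m+1 : ℤ) * ((-1:ℤ)^i * (m.choose i : ℤ))) := by
    intro i
    have hc : (m+1) * m.choose i = (m+1).choose (i+1) * (i+1) := Nat.add_one_mul_choose_eq m i
    have hc' : ((m+1 : ℕ) : ℤ) * (m.choose i : ℤ) = ((m+1).choose (i+1) : ℤ) * ((i:ℤ)+1) := by
      exact_mod_cast congrArg (fun x : ℕ => (x : ℤ)) hc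
    rw [nsmul_eq_mul, pow_succ]
    push_cast at hc' ⊢
    linear_combination (-1:ℤ)^i * hc'
  calc ∑ i ∈ Finset.range (m+1), ((m+1).choose (i+1)) • ((-1:ℤ)^(i+1) * ((i+1 : ℕ) : ℤ))
        + ((m+1).choose 0) • ((-1:ℤ)^0 * ((0:ℕ):ℤ))
      = ∑ i ∈ Finset.range (m+1), -((m+1 : ℤ) * ((-1:ℤ)^i * (m.choose i : ℤ))) := by
        rw [Finset.sum_congr rfl (fun i _ => by push_cast; rw [step i])]; simp
    _ = -((m+1 : ℤ) * ∑ i ∈ Finset.range (m+1), ((-1:ℤ)^i * (m.choose i : ℤ))) := by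
        rw [Finset.sum_neg_distrib, Finset.mul_sum]
    _ = 0 := by rw [Int.alternating_sum_range_choose_of_ne hm0]; simp
lemma ABproof.neg_one_pow_sub {k n : ℕ} (h : k ≤ n) : (-1:ℤ)^(n-k) = (-1)^n * (-1)^k := by
  conv_rhs => rw [← Nat.sub_add_cancel h]
  rw [pow_add, mul_assoc, ← pow_add]
  rw [Even.neg_one_pow ⟨k, rfl⟩, mul_one]

/-- For a matroid on a finite set with more than one element,
`β(M) = β(M✶)`. -/
theorem stmt_15 {α : Type*} [Fintype α] (M : Matroid α)
    (hE : M.E = Set.univ) (hcard : 1 < Fintype.card α) :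
    AB.beta M = AB.beta M✶ := by
  classical
  have hne : Nonempty α := Fintype.card_pos_iff.mp (by omega)
  set n := Fintype.card α with hn
  have hdual : ∀ X : Set α, AB.rank M✶ X + AB.rank M Set.univ
      = X.ncard + AB.rank M (Set.univ \ X) := ABproof.dual_rank_formula hE
  set r := AB.rank M Set.univ with hr
  set r' := AB.rank M✶ Set.univ with hr'
  have hrr' : r' + r = n := by
    have h := hdual Set.univ
    rw [Set.diff_self, ABproof.rank_empty, Set.ncard_univ, Nat.card_eq_fintype_card] at h
    omega
  -- rewrite the ranks of ground sets
  have hg1 : AB.rank M M.E = r := by rw [hE]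
  have hg2 : AB.rank M✶ M✶.E = r' := by rw [Matroid.dual_ground, hE]
  -- the sum for the dual
  have hpt : ∀ A : Finset α, (AB.rank M✶ ↑A : ℤ)
      = (A.card : ℤ) + (AB.rank M (Set.univ \ ↑A) : ℤ) - (r : ℤ) := by
    intro A
    have h := hdual ↑A
    rw [Set.ncard_coe_finset] at h
    omega
  set S : ℤ := ∑ A ∈ (Finset.univ : Finset α).powerset,
      (-1) ^ A.card * (AB.rank M ↑A : ℤ) with hS
  have hsum : ∑ A ∈ (Finset.univ : Finset α).powerset,
      (-1 : ℤ) ^ A.card * (AB.rank M✶ ↑A : ℤ) = (-1) ^ n * S := by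
    calc ∑ A ∈ (Finset.univ : Finset α).powerset,
          (-1 : ℤ) ^ A.card * (AB.rank M✶ ↑A : ℤ)
        = ∑ A ∈ (Finset.univ : Finset α).powerset,
          ((-1 : ℤ) ^ A.card * (A.card : ℤ)
            + (-1 : ℤ) ^ A.card * (AB.rank M (Set.univ \ ↑A) : ℤ)
            - (r : ℤ) * (-1 : ℤ) ^ A.card) := by
          refine Finset.sum_congr rfl fun A _ => ?_
          rw [hpt A]; ring
      _ = (∑ A ∈ (Finset.univ : Finset α).powerset, (-1 : ℤ) ^ A.card * (A.card : ℤ))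
            + (∑ A ∈ (Finset.univ : Finset α).powerset,
                (-1 : ℤ) ^ A.card * (AB.rank M (Set.univ \ ↑A) : ℤ))
            - (r : ℤ) * ∑ A ∈ (Finset.univ : Finset α).powerset, (-1 : ℤ) ^ A.card := by
          rw [Finset.sum_sub_distrib, Finset.sum_add_distrib, Finset.mul_sum]
      _ = ∑ A ∈ (Finset.univ : Finset α).powerset,
            (-1 : ℤ) ^ A.card * (AB.rank M (Set.univ \ ↑A) : ℤ) := by
          rw [ABproof.sum_neg_one_pow_mul_card hcard,
            Finset.sum_powerset_neg_one_pow_card_of_nonempty Finset.univ_nonempty]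
          ring
      _ = ∑ A : Finset α, (-1 : ℤ) ^ A.card * (AB.rank M ↑(Aᶜ) : ℤ) := by
          rw [Finset.powerset_univ]
          refine Finset.sum_congr rfl fun A _ => ?_
          rw [Finset.coe_compl, Set.compl_eq_univ_diff]
      _ = ∑ B : Finset α, (-1 : ℤ) ^ (Bᶜ).card * (AB.rank M ↑B : ℤ) := by
          refine Fintype.sum_equiv
            (Function.Involutive.toPerm _ (compl_compl : ∀ A : Finset α, Aᶜᶜ = A)) _ _
            (fun A => ?_)
          simp [Function.Involutive.toPerm]
      _ = (-1) ^ n * S := by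
          rw [hS, Finset.powerset_univ, Finset.mul_sum]
          refine Finset.sum_congr rfl fun B _ => ?_
          rw [Finset.card_compl, ABproof.neg_one_pow_sub (Finset.card_le_univ B)]
          ring
  have hsign : ((-1 : ℤ)) ^ r' * (-1) ^ n = (-1) ^ r := by
    rw [← hrr', pow_add, ← mul_assoc, ← pow_add, Even.neg_one_pow ⟨r', rfl⟩, one_mul]
  rw [AB.beta, AB.beta, hg1, hg2, hsum, ← mul_assoc, hsign]
end
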